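/- arXiv:1004.3165 — 2 statements merged into one kernel-verified Lean document; each statement's English description precedes it below -/
import Mathlib

section
/- Let n be an even positive integer. Let X be uniform on {0,1}^n, K uniform on [n] independent of X, and M⁰ a random variable on a finite set jointly distributed with (X,K); write M(x; x[1,j]) for the conditional law of M⁰ given (X,K) = (x,j). Suppose I(X : M⁰ | K, X[1,K]) ≤ d₁·n. Let J be uniform on [n/2] and L uniform on {n/2+1, …, n}, with X, J, L mutually independent. For l ∈ {n/2+1,…,n}, a prefix z ∈ {0,1}^l and j ∈ [n/2], let M(z·X[l+1,n]; z[1,j]) denote the mixture, over a uniformly random suffix s ∈ {0,1}^{n−l}, of the distributions M(z·s; z[1,j]). Then E_{(z,j,l)←(X[1,L],J,L)} h( M(z·X[l+1,n]; z[1,j]) , M(z[1,l−1]·z̄_l·X[l+1,n]; z[1,j]) )² ≤ 16 κ d₁, where z[1,l−1]·z̄_l is z with its l-th bit flipped. -/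
open Finset

/-- Hellinger distance between two distributions on a finite set. -/
noncomputable def hell {S : Type*} [Fintype S] (p q : S → ℝ) : ℝ :=
  Real.sqrt ((1/2) * ∑ s, (Real.sqrt (p s) - Real.sqrt (q s))^2)

/-- ℓ1-distance between two distributions on a finite set. -/
noncomputable def l1 {S : Type*} [Fintype S] (p q : S → ℝ) : ℝ :=
  ∑ s, |p s - q s|

/-- Shannon entropy (base 2) of a distribution on a finite set. -/
noncomputable def ent {S : Type*} [Fintype S] (p : S → ℝ) : ℝ :=
  -∑ s, p s * Real.logb 2 (p s)

/-- Conditional Shannon mutual information `I(A:B|C)` of a joint distribution on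
`A × B × C`, via `I(A:B|C) = H(A,C) + H(B,C) - H(A,B,C) - H(C)`. -/
noncomputable def condMI {A B C : Type*} [Fintype A] [Fintype B] [Fintype C]
    (p : A × B × C → ℝ) : ℝ :=
  ent (fun ac : A × C => ∑ b, p (ac.1, b, ac.2))
    + ent (fun bc : B × C => ∑ a, p (a, bc.1, bc.2))
    - ent p
    - ent (fun c : C => ∑ a, ∑ b, p (a, b, c))

/-- The prefix `x[1,k]` (1-based index `k = k₀+1` for `k₀ : Fin n`), padded with `false`. -/
def prefLe {n : ℕ} (x : Fin n → Bool) (k : Fin n) : Fin n → Bool :=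
  fun i => if i ≤ k then x i else false

/-- The strict prefix `x[1,k−1]`, padded with `false`. -/
def prefLt {n : ℕ} (x : Fin n → Bool) (k : Fin n) : Fin n → Bool :=
  fun i => if i < k then x i else false

/-- The string `x` with its `k`-th bit flipped. -/
def flipAt {n : ℕ} (x : Fin n → Bool) (k : Fin n) : Fin n → Bool :=
  Function.update x k (!(x k))

/-- `M(z·X[l+1,n]; z[1,k])`: the mixture, over a uniformly random suffix, of the
conditional laws `Mc y k` over Alice's strings `y` agreeing with `z` on the (1-based)
positions `1,…,l+1`, with Bob's index `k`. -/
noncomputable def mixC {n : ℕ} {T : Type*} [Fintype T]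
    (Mc : (Fin n → Bool) → Fin n → T → ℝ)
    (z : Fin n → Bool) (l k : Fin n) : T → ℝ :=
  fun m => (∑ y, if ∀ i, i ≤ l → y i = z i then Mc y k m else 0)
    / 2 ^ (n - ((l : ℕ) + 1))

lemma log_ge_one_sub_inv {t : ℝ} (ht : 0 < t) : 1 - 1/t ≤ Real.log t := by
  have h := Real.log_le_sub_one_of_pos (x := 1/t) (by positivity)
  rw [Real.log_div one_ne_zero (ne_of_gt ht), Real.log_one] at h
  linarith

lemma mul_log_sub_log_ge {p m : ℝ} (hp : 0 ≤ p) (hm : 0 ≤ m) (h : 0 < p → 0 < m) :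
    2*p - 2*Real.sqrt (p*m) ≤ p * (Real.log p - Real.log m) := by
  rcases eq_or_lt_of_le hp with rfl|hp'
  · simp
  have hm' := h hp'
  have ht : 0 < Real.sqrt p / Real.sqrt m := by positivity
  have hlog := log_ge_one_sub_inv ht
  rw [Real.log_div (by positivity) (by positivity), Real.log_sqrt hp, Real.log_sqrt hm] at hlog
  have h1 : Real.sqrt p * Real.sqrt m = Real.sqrt (p*m) := (Real.sqrt_mul hp m).symm
  have h2 : 1 / (Real.sqrt p / Real.sqrt m) = Real.sqrt m / Real.sqrt p := by
    field_simp
  rw [h2] at hlog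
  have h3 : p * (Real.sqrt m / Real.sqrt p) = Real.sqrt (p*m) := by
    have hps : Real.sqrt p * Real.sqrt p = p := Real.mul_self_sqrt hp
    have hsp : Real.sqrt p ≠ 0 := by positivity
    rw [← h1]
    field_simp
    nlinarith [Real.sqrt_nonneg p, Real.sqrt_nonneg m]
  nlinarith [mul_le_mul_of_nonneg_left hlog hp]

lemma ent_mul_log2 {T : Type*} [Fintype T] (r : T → ℝ) :
    ent r * Real.log 2 = -∑ s, r s * Real.log (r s) := by
  rw [ent, neg_mul, Finset.sum_mul, neg_inj]
  apply Finset.sum_congr rfl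
  intro s _
  rw [Real.logb]
  have h2 : Real.log 2 ≠ 0 := ne_of_gt (Real.log_pos (by norm_num))
  field_simp

lemma hellSq_le_js {T : Type*} [Fintype T] (p q : T → ℝ)
    (hp : ∀ s, 0 ≤ p s) (hq : ∀ s, 0 ≤ q s)
    (hsp : ∑ s, p s = 1) (hsq : ∑ s, q s = 1) :
    hell p q ^ 2 ≤ 2 * Real.log 2 *
      (ent (fun s => (p s + q s)/2) - (ent p + ent q)/2) := by
  set m : T → ℝ := fun s => (p s + q s)/2 with hm
  have hmn : ∀ s, 0 ≤ m s := fun s => by have := hp s; have := hq s; simp only [hm]; linarith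
  have hsm : ∑ s, m s = 1 := by
    simp only [hm]
    rw [show (fun s => (p s + q s)/2) = (fun s => p s / 2 + q s / 2) by funext s; ring]
    rw [Finset.sum_add_distrib, ← Finset.sum_div, ← Finset.sum_div, hsp, hsq]
    norm_num
  have hnn : (0:ℝ) ≤ (1/2) * ∑ s, (Real.sqrt (p s) - Real.sqrt (q s))^2 := by positivity
  have hhell : hell p q ^ 2 = (1/2) * ∑ s, (Real.sqrt (p s) - Real.sqrt (q s))^2 := by
    rw [hell, Real.sq_sqrt hnn]
  have step1 : hell p q ^ 2 ≤
      (∑ s, (Real.sqrt (p s) - Real.sqrt (m s))^2) + ∑ s, (Real.sqrt (q s) - Real.sqrt (m s))^2 := by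
    rw [hhell, ← Finset.sum_add_distrib, Finset.mul_sum]
    apply Finset.sum_le_sum
    intro s _
    nlinarith [sq_nonneg (Real.sqrt (p s) + Real.sqrt (q s) - 2 * Real.sqrt (m s))]
  have key : ∀ (r : T → ℝ), (∀ s, 0 ≤ r s) → (∑ s, r s = 1) → (∀ s, r s ≤ 2 * m s) →
      (∑ s, (Real.sqrt (r s) - Real.sqrt (m s))^2) ≤ ∑ s, r s * (Real.log (r s) - Real.log (m s)) := by
    intro r hr hsr hrm
    have expand : ∀ s, (Real.sqrt (r s) - Real.sqrt (m s))^2 = r s + m s - 2 * Real.sqrt (r s * m s) := by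
      intro s
      rw [sub_sq, Real.sq_sqrt (hr s), Real.sq_sqrt (hmn s), Real.sqrt_mul (hr s)]
      ring
    have e1 : (∑ s, (Real.sqrt (r s) - Real.sqrt (m s))^2)
        - ∑ s, (2 * r s - 2 * Real.sqrt (r s * m s)) = 0 := by
      rw [← Finset.sum_sub_distrib]
      have e2 : ∀ s : T, (Real.sqrt (r s) - Real.sqrt (m s))^2 - (2 * r s - 2 * Real.sqrt (r s * m s))
          = m s - r s := fun s => by rw [expand s]; ring
      rw [Finset.sum_congr rfl (fun s _ => e2 s), Finset.sum_sub_distrib, hsm, hsr]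
      ring
    have e3 : (∑ s, (Real.sqrt (r s) - Real.sqrt (m s))^2)
        = ∑ s, (2 * r s - 2 * Real.sqrt (r s * m s)) := by linarith
    rw [e3]
    apply Finset.sum_le_sum
    intro s _
    exact mul_log_sub_log_ge (hr s) (hmn s) (fun h => by have := hrm s; linarith)
  have alg : 2 * Real.log 2 * (ent m - (ent p + ent q)/2)
      = (∑ s, p s * (Real.log (p s) - Real.log (m s)))
        + ∑ s, q s * (Real.log (q s) - Real.log (m s)) := by
    have hA : (∑ s, p s * (Real.log (p s) - Real.log (m s)))
        = (∑ s, p s * Real.log (p s)) - ∑ s, p s * Real.log (m s) := by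
      rw [← Finset.sum_sub_distrib]; apply Finset.sum_congr rfl; intro s _; ring
    have hB : (∑ s, q s * (Real.log (q s) - Real.log (m s)))
        = (∑ s, q s * Real.log (q s)) - ∑ s, q s * Real.log (m s) := by
      rw [← Finset.sum_sub_distrib]; apply Finset.sum_congr rfl; intro s _; ring
    have hC : (∑ s, p s * Real.log (m s)) + (∑ s, q s * Real.log (m s))
        = 2 * ∑ s, m s * Real.log (m s) := by
      rw [← Finset.sum_add_distrib, Finset.mul_sum]
      apply Finset.sum_congr rfl
      intro s _
      simp only [hm]; ring
    have h1 := ent_mul_log2 p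
    have h2 := ent_mul_log2 q
    have h3 := ent_mul_log2 m
    have h4 : 2 * Real.log 2 * (ent m - (ent p + ent q)/2)
        = 2 * (ent m * Real.log 2) - (ent p * Real.log 2 + ent q * Real.log 2) := by ring
    rw [h4, h1, h2, h3, hA, hB]
    linarith
  rw [alg]
  have k1 := key p hp hsp (fun s => by have := hq s; simp only [hm]; linarith)
  have k2 := key q hq hsq (fun s => by have := hp s; simp only [hm]; linarith)
  linarith

/-- The agreeing-prefix equivalence. -/
def agreeEquiv {n : ℕ} (x : Fin n → Bool) (k : Fin n) :
    {y : Fin n → Bool // ∀ i, i ≤ k → y i = x i} ≃ ({i : Fin n // k < i} → Bool) where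
  toFun y i := y.1 i.1
  invFun g := ⟨fun i => if h : k < i then g ⟨i, h⟩ else x i,
    fun i hi => dif_neg (not_lt.2 hi)⟩
  left_inv y := by
    apply Subtype.ext
    funext i
    by_cases h : k < i
    · simp [h]
    · simp [h, y.2 i (le_of_not_gt h)]
  right_inv g := by funext i; simp [i.2]

lemma card_agree {n : ℕ} (x : Fin n → Bool) (k : Fin n) :
    Fintype.card {y : Fin n → Bool // ∀ i, i ≤ k → y i = x i} = 2^(n - ((k:ℕ)+1)) := by
  rw [Fintype.card_congr (agreeEquiv x k), Fintype.card_fun]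
  rw [Fintype.card_bool, Fintype.card_subtype]
  have : (Finset.univ.filter (fun i : Fin n => k < i)) = Finset.Ioi k :=
    Finset.filter_lt_eq_Ioi
  rw [this, Fin.card_Ioi, Nat.sub_sub, Nat.add_comm]

lemma sum_agree {n : ℕ} (x : Fin n → Bool) (k : Fin n) :
    ∑ y : Fin n → Bool, (if ∀ i, i ≤ k → y i = x i then (1:ℝ) else 0)
      = 2^(n - ((k:ℕ)+1)) := by
  rw [Finset.sum_boole]
  rw [show (Finset.univ.filter (fun y : Fin n → Bool => ∀ i, i ≤ k → y i = x i)).card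
      = Fintype.card {y : Fin n → Bool // ∀ i, i ≤ k → y i = x i} from
    (Fintype.card_subtype _).symm]
  rw [card_agree]
  push_cast
  ring

section mixlemmas
variable {n : ℕ} {T : Type*} [Fintype T] (Mc : (Fin n → Bool) → Fin n → T → ℝ)

lemma mixC_nonneg (hnn : ∀ x k m, 0 ≤ Mc x k m) (z : Fin n → Bool) (l k : Fin n) (m : T) :
    0 ≤ mixC Mc z l k m := by
  apply div_nonneg _ (by positivity)
  apply Finset.sum_nonneg
  intro y _
  split
  · exact hnn y k m
  · exact le_refl 0

lemma mixC_sum_one (hsum : ∀ x k, ∑ m, Mc x k m = 1) (z : Fin n → Bool) (l k : Fin n) :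
    ∑ m, mixC Mc z l k m = 1 := by
  unfold mixC
  rw [← Finset.sum_div, Finset.sum_comm]
  have h1 : ∀ y : Fin n → Bool,
      (∑ m, if ∀ i, i ≤ l → y i = z i then Mc y k m else 0)
        = (if ∀ i, i ≤ l → y i = z i then (1:ℝ) else 0) := by
    intro y
    by_cases h : ∀ i, i ≤ l → y i = z i
    · simp [h, hsum y k]
    · simp [h]
  rw [Finset.sum_congr rfl (fun y _ => h1 y), sum_agree z l]
  apply div_self
  positivity

lemma mixC_congr {z z' : Fin n → Bool} (l k : Fin n) (h : ∀ i, i ≤ l → z i = z' i) :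
    mixC Mc z l k = mixC Mc z' l k := by
  funext m
  unfold mixC
  congr 1
  apply Finset.sum_congr rfl
  intro y _
  apply if_congr _ rfl rfl
  constructor
  · intro hy i hi; rw [← h i hi]; exact hy i hi
  · intro hy i hi; rw [h i hi]; exact hy i hi

lemma mixC_last {l : Fin n} (hl : (l:ℕ) + 1 = n) (z : Fin n → Bool) (k : Fin n) :
    mixC Mc z l k = Mc z k := by
  funext m
  unfold mixC
  have h1 : ∀ y : Fin n → Bool, (∀ i, i ≤ l → y i = z i) ↔ y = z := by
    intro y
    constructor
    · intro hy; funext i; exact hy i (by rw [Fin.le_def]; omega)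
    · intro hy i _; rw [hy]
  rw [Finset.sum_congr rfl (fun y _ => if_congr (h1 y) rfl rfl)]
  rw [Finset.sum_ite_eq' Finset.univ z (fun y => Mc y k m)]
  simp [Finset.mem_univ, hl]

lemma mixC_split {l l' : Fin n} (hl : (l':ℕ) = (l:ℕ)+1) (z : Fin n → Bool) (k : Fin n) (m : T) :
    mixC Mc z l k m = (mixC Mc z l' k m + mixC Mc (flipAt z l') l' k m) / 2 := by
  unfold mixC
  have hsplit : ∀ y : Fin n → Bool,
      (if ∀ i, i ≤ l → y i = z i then Mc y k m else 0)
        = (if ∀ i, i ≤ l' → y i = z i then Mc y k m else 0)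
          + (if ∀ i, i ≤ l' → y i = flipAt z l' i then Mc y k m else 0) := by
    intro y
    have hflip : ∀ i : Fin n, flipAt z l' i = if i = l' then !(z l') else z i := by
      intro i; rw [flipAt, Function.update_apply]
    by_cases hy : y l' = z l'
    · have hB : ¬ (∀ i, i ≤ l' → y i = flipAt z l' i) := by
        intro hc
        have := hc l' (le_refl l')
        rw [hflip l', if_pos rfl, hy] at this
        simp at this
      have hAB : (∀ i, i ≤ l → y i = z i) ↔ (∀ i, i ≤ l' → y i = z i) := by
        constructor
        · intro hA i hi
          rcases (by rw [Fin.le_def] at hi ⊢; omega :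
              i ≤ l ∨ (i:ℕ) = (l':ℕ)) with h | h
          · exact hA i h
          · rwa [show i = l' from Fin.ext h]
        · intro hB i hi
          exact hB i (by rw [Fin.le_def] at hi ⊢; omega)
      rw [if_neg hB, if_congr hAB rfl rfl, add_zero]
    · have hy' : y l' = !(z l') := by
        cases hz : z l' <;> cases hyv : y l' <;> simp_all
      have hB : ¬ (∀ i, i ≤ l' → y i = z i) := by
        intro hc
        exact hy (hc l' (le_refl l'))
      have hAB : (∀ i, i ≤ l → y i = z i) ↔ (∀ i, i ≤ l' → y i = flipAt z l' i) := by
        constructor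
        · intro hA i hi
          by_cases hil : i = l'
          · rw [hil, hflip l', if_pos rfl, hy']
          · have hi' : i ≤ l := by
              rw [Fin.le_def] at hi ⊢
              have : (i:ℕ) ≠ (l':ℕ) := fun hc => hil (Fin.ext hc)
              omega
            rw [hflip i, if_neg hil]
            exact hA i hi'
        · intro hB i hi
          have hil : i ≠ l' := by
            intro hc
            rw [Fin.le_def, hc, hl] at hi
            omega
          have := hB i (by rw [Fin.le_def] at hi ⊢; omega)
          rwa [hflip i, if_neg hil] at this
      rw [if_neg hB, if_congr hAB rfl rfl, zero_add]
  rw [Finset.sum_congr rfl (fun y _ => hsplit y), Finset.sum_add_distrib]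
  have hexp : n - ((l:ℕ)+1) = (n - ((l':ℕ)+1)) + 1 := by
    have := l'.isLt
    omega
  rw [hexp, pow_succ]
  field_simp
end mixlemmas

noncomputable def Fent {n : ℕ} {T : Type*} [Fintype T]
    (Mc : (Fin n → Bool) → Fin n → T → ℝ) (k l : Fin n) : ℝ :=
  (1/2^n) * ∑ x : Fin n → Bool, ent (mixC Mc x l k)

section fent
variable {n : ℕ} {T : Type*} [Fintype T] (Mc : (Fin n → Bool) → Fin n → T → ℝ)
  (hnn : ∀ x k m, 0 ≤ Mc x k m) (hsum : ∀ x k, ∑ m, Mc x k m = 1)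

lemma flip_involutive (l : Fin n) : Function.Involutive (fun x : Fin n → Bool => flipAt x l) := by
  intro x
  funext i
  by_cases h : i = l
  · subst h; simp [flipAt, Function.update_apply]
  · simp [flipAt, Function.update_apply, h]

include hnn hsum in
lemma Fent_step {l l' : Fin n} (hl : (l':ℕ) = (l:ℕ)+1) (k : Fin n) :
    (1/2^n) * (∑ x : Fin n → Bool,
        hell (mixC Mc x l' k) (mixC Mc (flipAt x l') l' k) ^ 2)
      ≤ 2 * Real.log 2 * (Fent Mc k l - Fent Mc k l') := by
  have hmid : ∀ x : Fin n → Bool, ent (mixC Mc x l k)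
      = ent (fun m => (mixC Mc x l' k m + mixC Mc (flipAt x l') l' k m)/2) := by
    intro x
    congr 1
    funext m
    exact mixC_split Mc hl x k m
  have hpt : ∀ x : Fin n → Bool,
      hell (mixC Mc x l' k) (mixC Mc (flipAt x l') l' k) ^ 2
        ≤ 2 * Real.log 2 * (ent (mixC Mc x l k)
            - (ent (mixC Mc x l' k) + ent (mixC Mc (flipAt x l') l' k))/2) := by
    intro x
    rw [hmid x]
    exact hellSq_le_js _ _ (mixC_nonneg Mc hnn _ _ _) (mixC_nonneg Mc hnn _ _ _)
      (mixC_sum_one Mc hsum _ _ _) (mixC_sum_one Mc hsum _ _ _)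
  have hflipsum : (∑ x : Fin n → Bool, ent (mixC Mc (flipAt x l') l' k))
      = ∑ x : Fin n → Bool, ent (mixC Mc x l' k) := by
    exact Equiv.sum_comp ((flip_involutive l').toPerm) (fun x => ent (mixC Mc x l' k))
  have hsum2 : (∑ x : Fin n → Bool,
        hell (mixC Mc x l' k) (mixC Mc (flipAt x l') l' k) ^ 2)
      ≤ 2 * Real.log 2 * ((∑ x : Fin n → Bool, ent (mixC Mc x l k))
          - ∑ x : Fin n → Bool, ent (mixC Mc x l' k)) := by
    calc (∑ x : Fin n → Bool, hell (mixC Mc x l' k) (mixC Mc (flipAt x l') l' k) ^ 2)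
        ≤ ∑ x : Fin n → Bool, 2 * Real.log 2 * (ent (mixC Mc x l k)
            - (ent (mixC Mc x l' k) + ent (mixC Mc (flipAt x l') l' k))/2) :=
          Finset.sum_le_sum (fun x _ => hpt x)
      _ = 2 * Real.log 2 * ((∑ x : Fin n → Bool, ent (mixC Mc x l k))
          - ((∑ x : Fin n → Bool, ent (mixC Mc x l' k))
            + ∑ x : Fin n → Bool, ent (mixC Mc (flipAt x l') l' k))/2) := by
          rw [← Finset.mul_sum]
          congr 1
          rw [Finset.sum_sub_distrib]
          congr 1
          rw [← Finset.sum_div, Finset.sum_add_distrib]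
      _ = 2 * Real.log 2 * ((∑ x : Fin n → Bool, ent (mixC Mc x l k))
          - ∑ x : Fin n → Bool, ent (mixC Mc x l' k)) := by
          rw [hflipsum]; ring_nf
  have h2n : (0:ℝ) < 1/2^n := by positivity
  calc (1/2^n) * (∑ x : Fin n → Bool,
        hell (mixC Mc x l' k) (mixC Mc (flipAt x l') l' k) ^ 2)
      ≤ (1/2^n) * (2 * Real.log 2 * ((∑ x : Fin n → Bool, ent (mixC Mc x l k))
          - ∑ x : Fin n → Bool, ent (mixC Mc x l' k))) :=
        mul_le_mul_of_nonneg_left hsum2 h2n.le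
    _ = 2 * Real.log 2 * (Fent Mc k l - Fent Mc k l') := by
        rw [Fent, Fent]; ring
end fent

section tele
variable {n : ℕ} {T : Type*} [Fintype T] (Mc : (Fin n → Bool) → Fin n → T → ℝ)
  (hnn : ∀ x k m, 0 ≤ Mc x k m) (hsum : ∀ x k, ∑ m, Mc x k m = 1)

include hnn hsum in
lemma Fent_telescope (k : Fin n) : ∀ b : ℕ, (hb : b < n) → (k:ℕ) ≤ b →
    (1/2^n) * ∑ x : Fin n → Bool,
        ∑ l ∈ Finset.univ.filter (fun l : Fin n => (k:ℕ) < (l:ℕ) ∧ (l:ℕ) ≤ b),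
          hell (mixC Mc x l k) (mixC Mc (flipAt x l) l k) ^ 2
      ≤ 2 * Real.log 2 * (Fent Mc k k - Fent Mc k ⟨b, hb⟩) := by
  intro b
  induction b with
  | zero =>
    intro hb hk
    have hk0 : k = ⟨0, hb⟩ := Fin.ext (by simpa using hk)
    have hempty : (Finset.univ.filter (fun l : Fin n => (k:ℕ) < (l:ℕ) ∧ (l:ℕ) ≤ 0)) = ∅ := by
      apply Finset.filter_false_of_mem
      intro l _
      omega
    rw [hempty]
    simp [← hk0]
  | succ b IH =>
    intro hb hk
    by_cases hkb : (k:ℕ) = b + 1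
    · have hempty : (Finset.univ.filter (fun l : Fin n => (k:ℕ) < (l:ℕ) ∧ (l:ℕ) ≤ b+1)) = ∅ := by
        apply Finset.filter_false_of_mem
        intro l _
        omega
      have hkeq : k = ⟨b+1, hb⟩ := Fin.ext hkb
      rw [hempty]
      simp [← hkeq]
    · have hk' : (k:ℕ) ≤ b := by omega
      have hbn : b < n := by omega
      have hnotmem : (⟨b+1, hb⟩ : Fin n) ∉
          Finset.univ.filter (fun l : Fin n => (k:ℕ) < (l:ℕ) ∧ (l:ℕ) ≤ b) := by
        simp
      have hins : (Finset.univ.filter (fun l : Fin n => (k:ℕ) < (l:ℕ) ∧ (l:ℕ) ≤ b+1))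
          = insert (⟨b+1, hb⟩ : Fin n)
              (Finset.univ.filter (fun l : Fin n => (k:ℕ) < (l:ℕ) ∧ (l:ℕ) ≤ b)) := by
        ext l
        simp [Fin.ext_iff]
        omega
      have hstep := Fent_step Mc hnn hsum
        (l := ⟨b, hbn⟩) (l' := ⟨b+1, hb⟩) (by simp) k
      have hIH := IH hbn hk'
      calc (1/2^n) * ∑ x : Fin n → Bool,
          ∑ l ∈ Finset.univ.filter (fun l : Fin n => (k:ℕ) < (l:ℕ) ∧ (l:ℕ) ≤ b+1),
            hell (mixC Mc x l k) (mixC Mc (flipAt x l) l k) ^ 2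
          = (1/2^n) * ∑ x : Fin n → Bool,
              (hell (mixC Mc x ⟨b+1, hb⟩ k) (mixC Mc (flipAt x ⟨b+1, hb⟩) ⟨b+1, hb⟩ k) ^ 2
               + ∑ l ∈ Finset.univ.filter (fun l : Fin n => (k:ℕ) < (l:ℕ) ∧ (l:ℕ) ≤ b),
                  hell (mixC Mc x l k) (mixC Mc (flipAt x l) l k) ^ 2) := by
            congr 1
            apply Finset.sum_congr rfl
            intro x _
            rw [hins, Finset.sum_insert hnotmem]
        _ = (1/2^n) * (∑ x : Fin n → Bool,
              hell (mixC Mc x ⟨b+1, hb⟩ k) (mixC Mc (flipAt x ⟨b+1, hb⟩) ⟨b+1, hb⟩ k) ^ 2)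
            + (1/2^n) * ∑ x : Fin n → Bool,
              ∑ l ∈ Finset.univ.filter (fun l : Fin n => (k:ℕ) < (l:ℕ) ∧ (l:ℕ) ≤ b),
                hell (mixC Mc x l k) (mixC Mc (flipAt x l) l k) ^ 2 := by
            rw [Finset.sum_add_distrib]
            ring
        _ ≤ 2 * Real.log 2 * (Fent Mc k ⟨b, hbn⟩ - Fent Mc k ⟨b+1, hb⟩)
            + 2 * Real.log 2 * (Fent Mc k k - Fent Mc k ⟨b, hbn⟩) :=
            add_le_add hstep hIH
        _ = 2 * Real.log 2 * (Fent Mc k k - Fent Mc k ⟨b+1, hb⟩) := by ring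

include hnn hsum in
lemma diff_nonneg (hpos : 0 < n) (k : Fin n) :
    0 ≤ 2 * Real.log 2 * (Fent Mc k k - Fent Mc k ⟨n-1, by omega⟩) := by
  refine le_trans ?_ (Fent_telescope Mc hnn hsum k (n-1) (by omega) (by omega))
  apply mul_nonneg (by positivity)
  apply Finset.sum_nonneg
  intro x _
  apply Finset.sum_nonneg
  intro l _
  positivity
end tele

lemma mul_logb_split (a b : ℝ) (ha : 0 ≤ a) (hb : 0 ≤ b) :
    (a*b) * Real.logb 2 (a*b) = b*(a*Real.logb 2 a) + a*(b*Real.logb 2 b) := by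
  rcases eq_or_lt_of_le ha with rfl|ha'
  · simp
  rcases eq_or_lt_of_le hb with rfl|hb'
  · simp
  rw [Real.logb, Real.log_mul (ne_of_gt ha') (ne_of_gt hb'), Real.logb, Real.logb]
  ring

section prefsec
variable {n : ℕ}

lemma prefLe_apply_le (x : Fin n → Bool) (k i : Fin n) (h : i ≤ k) : prefLe x k i = x i :=
  if_pos h

lemma prefLe_eq_iff {x x' : Fin n → Bool} {k : Fin n} :
    prefLe x k = prefLe x' k ↔ ∀ i, i ≤ k → x i = x' i := by
  constructor
  · intro h i hi
    have := congrFun h i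
    rwa [prefLe_apply_le x k i hi, prefLe_apply_le x' k i hi] at this
  · intro h
    funext i
    unfold prefLe
    by_cases hi : i ≤ k
    · rw [if_pos hi, if_pos hi, h i hi]
    · rw [if_neg hi, if_neg hi]

lemma sum_pref_collapse {k : Fin n} (φ : (Fin n → Bool) → ℝ) :
    ∑ z : Fin n → Bool,
        (∑ x : Fin n → Bool, if z = prefLe x k then (1:ℝ) else 0) * φ z
      = ∑ x : Fin n → Bool, φ (prefLe x k) := by
  have h1 : ∀ z : Fin n → Bool,
      (∑ x : Fin n → Bool, if z = prefLe x k then (1:ℝ) else 0) * φ z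
        = ∑ x : Fin n → Bool, if z = prefLe x k then φ z else 0 := by
    intro z
    rw [Finset.sum_mul]
    apply Finset.sum_congr rfl
    intro x _
    by_cases h : z = prefLe x k <;> simp [h]
  rw [Finset.sum_congr rfl (fun z _ => h1 z), Finset.sum_comm]
  apply Finset.sum_congr rfl
  intro x _
  have h2 : ∀ z : Fin n → Bool, (if z = prefLe x k then φ z else 0) =
      (if z = prefLe x k then φ (prefLe x k) else 0) := by
    intro z
    by_cases h : z = prefLe x k <;> simp [h]
  rw [Finset.sum_congr rfl (fun z _ => h2 z), Finset.sum_ite_eq' Finset.univ (prefLe x k)]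
  simp

lemma W_pref (x : Fin n → Bool) (k : Fin n) :
    (∑ x' : Fin n → Bool, if prefLe x k = prefLe x' k then (1:ℝ) else 0)
      = 2^(n-((k:ℕ)+1)) := by
  have h1 : ∀ x' : Fin n → Bool,
      (if prefLe x k = prefLe x' k then (1:ℝ) else 0)
        = (if ∀ i, i ≤ k → x' i = x i then (1:ℝ) else 0) := by
    intro x'
    apply if_congr _ rfl rfl
    rw [prefLe_eq_iff]
    constructor
    · intro h i hi; exact (h i hi).symm
    · intro h i hi; exact (h i hi).symm
  rw [Finset.sum_congr rfl (fun x' _ => h1 x'), sum_agree x k]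
end prefsec

section rfact
variable {n : ℕ} {T : Type*} [Fintype T] (Mc : (Fin n → Bool) → Fin n → T → ℝ)

lemma rfact (k : Fin n) (z : Fin n → Bool) (m : T) :
    (∑ x : Fin n → Bool, if z = prefLe x k then Mc x k m else 0)
      = (∑ x : Fin n → Bool, if z = prefLe x k then (1:ℝ) else 0) * mixC Mc z k k m := by
  by_cases hz : ∃ x₀ : Fin n → Bool, z = prefLe x₀ k
  · obtain ⟨x₀, hx₀⟩ := hz
    have hiff : ∀ x : Fin n → Bool, (z = prefLe x k) ↔ (∀ i, i ≤ k → x i = z i) := by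
      intro x
      constructor
      · intro h i hi
        rw [h, prefLe_apply_le x k i hi]
      · intro h
        rw [hx₀]
        funext i
        unfold prefLe
        by_cases hi : i ≤ k
        · rw [if_pos hi, if_pos hi, h i hi]
          have := congrFun hx₀ i
          rw [prefLe] at this
          rw [if_pos hi] at this
          exact this.symm ▸ rfl
        · rw [if_neg hi, if_neg hi]
    have hW : (∑ x : Fin n → Bool, if z = prefLe x k then (1:ℝ) else 0)
        = 2^(n-((k:ℕ)+1)) := by
      rw [hx₀]
      exact W_pref x₀ k
    rw [hW, Finset.sum_congr rfl (fun x _ => if_congr (hiff x) rfl rfl)]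
    rw [mixC]
    field_simp
  · push_neg at hz
    have h0 : ∀ x : Fin n → Bool, (if z = prefLe x k then Mc x k m else 0) = 0 := by
      intro x; rw [if_neg (hz x)]
    have h0' : ∀ x : Fin n → Bool, (if z = prefLe x k then (1:ℝ) else 0) = 0 := by
      intro x; rw [if_neg (hz x)]
    rw [Finset.sum_congr rfl (fun x _ => h0 x), Finset.sum_congr rfl (fun x _ => h0' x)]
    simp
end rfact

section cmi
variable {n : ℕ} {T : Type*} [Fintype T] (Mc : (Fin n → Bool) → Fin n → T → ℝ)
  (hnn : ∀ x k m, 0 ≤ Mc x k m) (hsum : ∀ x k, ∑ m, Mc x k m = 1)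

lemma sum_ite_pref (x : Fin n → Bool) (k : Fin n) (g : (Fin n → Bool) → ℝ) :
    (∑ z : Fin n → Bool, if z = prefLe x k then g z else 0) = g (prefLe x k) := by
  rw [Finset.sum_ite_eq' Finset.univ (prefLe x k) g]
  simp

lemma W_nonneg (k : Fin n) (z : Fin n → Bool) :
    0 ≤ ∑ x : Fin n → Bool, (if z = prefLe x k then (1:ℝ) else 0) := by
  apply Finset.sum_nonneg; intro x _; split <;> norm_num

include hnn hsum in
lemma condMI_eq (hpos : 0 < n) :
    condMI (fun q : (Fin n → Bool) × T × (Fin n × (Fin n → Bool)) =>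
        if q.2.2.2 = prefLe q.1 q.2.2.1 then
          (1 / 2 ^ n) * (1 / (n : ℝ)) * Mc q.1 q.2.2.1 q.2.1
        else 0)
      = (1/(n:ℝ)) * ∑ k : Fin n,
          (Fent Mc k k - Fent Mc k ⟨n-1, by omega⟩) := by
  set c : ℝ := (1 / 2 ^ n) * (1 / (n : ℝ)) with hc
  have hcpos : 0 < c := by
    rw [hc]
    have : (0:ℝ) < (n:ℝ) := by exact_mod_cast hpos
    positivity
  rw [condMI]
  set W : Fin n → (Fin n → Bool) → ℝ :=
    fun k z => ∑ x : Fin n → Bool, (if z = prefLe x k then (1:ℝ) else 0) with hW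
  -- marginal 1 : (X, (K,Z))
  have m1 : (fun ac : (Fin n → Bool) × (Fin n × (Fin n → Bool)) =>
      ∑ b : T, if ac.2.2 = prefLe ac.1 ac.2.1 then c * Mc ac.1 ac.2.1 b else 0)
      = fun ac => if ac.2.2 = prefLe ac.1 ac.2.1 then c else 0 := by
    funext ac
    by_cases h : ac.2.2 = prefLe ac.1 ac.2.1
    · simp only [h, if_true, ← Finset.mul_sum, hsum ac.1 ac.2.1, mul_one]
    · simp [h]
  have e1 : ent (fun ac : (Fin n → Bool) × (Fin n × (Fin n → Bool)) =>
      if ac.2.2 = prefLe ac.1 ac.2.1 then c else 0)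
      = -(2^n * (n:ℝ) * (c * Real.logb 2 c)) := by
    rw [ent]
    simp only [Fintype.sum_prod_type]
    have h2 : ∀ (x : Fin n → Bool) (k : Fin n),
        (∑ z : Fin n → Bool, (if z = prefLe x k then c else 0)
            * Real.logb 2 (if z = prefLe x k then c else 0))
          = c * Real.logb 2 c := by
      intro x k
      have h1 : ∀ z : Fin n → Bool, (if z = prefLe x k then c else 0)
          * Real.logb 2 (if z = prefLe x k then c else 0)
          = if z = prefLe x k then c * Real.logb 2 c else 0 := by
        intro z; by_cases h : z = prefLe x k <;> simp [h]
      rw [Finset.sum_congr rfl (fun z _ => h1 z),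
        sum_ite_pref x k (fun _ => c * Real.logb 2 c)]
    rw [Finset.sum_congr rfl (fun x _ => Finset.sum_congr rfl (fun k _ => h2 x k))]
    simp only [Finset.sum_const, Finset.card_univ, Fintype.card_fin, nsmul_eq_mul]
    have hcard : (Fintype.card (Fin n → Bool) : ℝ) = 2^n := by
      rw [Fintype.card_fun, Fintype.card_bool, Fintype.card_fin]
      push_cast
      ring
    rw [hcard]
    ring
  have hcard : (Fintype.card (Fin n → Bool) : ℝ) = 2^n := by
    rw [Fintype.card_fun, Fintype.card_bool, Fintype.card_fin]
    push_cast
    ring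
  -- marginal 4 : (K,Z)
  have m4 : (fun cc : Fin n × (Fin n → Bool) =>
      ∑ a : Fin n → Bool, ∑ b : T, if cc.2 = prefLe a cc.1 then c * Mc a cc.1 b else 0)
      = fun cc => W cc.1 cc.2 * c := by
    funext cc
    have h1 : ∀ a : Fin n → Bool,
        (∑ b : T, if cc.2 = prefLe a cc.1 then c * Mc a cc.1 b else 0)
          = (if cc.2 = prefLe a cc.1 then (1:ℝ) else 0) * c := by
      intro a
      by_cases h : cc.2 = prefLe a cc.1
      · simp [h, ← Finset.sum_mul, ← Finset.mul_sum, hsum a cc.1, mul_comm]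
      · simp [h]
    rw [Finset.sum_congr rfl (fun a _ => h1 a), ← Finset.sum_mul, hW]
  have e4inner : ∀ k : Fin n,
      (∑ z : Fin n → Bool, (W k z * c) * Real.logb 2 (W k z * c))
        = (2^n * c) * Real.logb 2 (2^(n-((k:ℕ)+1)) * c) := by
    intro k
    simp only [hW]
    have h1 : ∀ z : Fin n → Bool,
        ((∑ x : Fin n → Bool, if z = prefLe x k then (1:ℝ) else 0) * c)
          * Real.logb 2 ((∑ x : Fin n → Bool, if z = prefLe x k then (1:ℝ) else 0) * c)
        = (∑ x : Fin n → Bool, if z = prefLe x k then (1:ℝ) else 0)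
          * (c * Real.logb 2 ((∑ x : Fin n → Bool, if z = prefLe x k then (1:ℝ) else 0) * c)) := by
      intro z; ring
    rw [Finset.sum_congr rfl (fun z _ => h1 z),
      sum_pref_collapse (fun z => c * Real.logb 2
        ((∑ x : Fin n → Bool, if z = prefLe x k then (1:ℝ) else 0) * c))]
    have h2 : ∀ x : Fin n → Bool,
        c * Real.logb 2 ((∑ x' : Fin n → Bool, if prefLe x k = prefLe x' k then (1:ℝ) else 0) * c)
          = c * Real.logb 2 (2^(n-((k:ℕ)+1)) * c) := by
      intro x; rw [W_pref]
    rw [Finset.sum_congr rfl (fun x _ => h2 x)]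
    simp only [Finset.sum_const, Finset.card_univ, nsmul_eq_mul]
    rw [hcard]
    ring
  have e4 : ent (fun cc : Fin n × (Fin n → Bool) => W cc.1 cc.2 * c)
      = -∑ k : Fin n, (2^n * c) * Real.logb 2 (2^(n-((k:ℕ)+1)) * c) := by
    rw [ent, Fintype.sum_prod_type, neg_inj]
    exact Finset.sum_congr rfl (fun k _ => e4inner k)
  -- marginal 2 : (M,(K,Z))
  have m2 : (fun bc : T × (Fin n × (Fin n → Bool)) =>
      ∑ a : Fin n → Bool, if bc.2.2 = prefLe a bc.2.1 then c * Mc a bc.2.1 bc.1 else 0)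
      = fun bc => (W bc.2.1 bc.2.2 * c) * mixC Mc bc.2.2 bc.2.1 bc.2.1 bc.1 := by
    funext bc
    have h1 : ∀ a : Fin n → Bool,
        (if bc.2.2 = prefLe a bc.2.1 then c * Mc a bc.2.1 bc.1 else 0)
          = c * (if bc.2.2 = prefLe a bc.2.1 then Mc a bc.2.1 bc.1 else 0) := by
      intro a; split <;> simp
    rw [Finset.sum_congr rfl (fun a _ => h1 a), ← Finset.mul_sum,
      rfact Mc bc.2.1 bc.2.2 bc.1, hW]
    ring
  have e2 : ent (fun bc : T × (Fin n × (Fin n → Bool)) =>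
      (W bc.2.1 bc.2.2 * c) * mixC Mc bc.2.2 bc.2.1 bc.2.1 bc.1)
      = (-∑ k : Fin n, (2^n * c) * Real.logb 2 (2^(n-((k:ℕ)+1)) * c))
        + c * ∑ k : Fin n, ∑ x : Fin n → Bool, ent (mixC Mc x k k) := by
    rw [ent]
    simp only [Fintype.sum_prod_type]
    rw [Finset.sum_comm]
    have hout : ∀ k : Fin n,
        (∑ m : T, ∑ z : Fin n → Bool,
          ((W k z * c) * mixC Mc z k k m) * Real.logb 2 ((W k z * c) * mixC Mc z k k m))
        = (2^n * c) * Real.logb 2 (2^(n-((k:ℕ)+1)) * c)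
            - c * ∑ x : Fin n → Bool, ent (mixC Mc x k k) := by
      intro k
      rw [Finset.sum_comm]
      have hin : ∀ z : Fin n → Bool,
          (∑ m : T, ((W k z * c) * mixC Mc z k k m) * Real.logb 2 ((W k z * c) * mixC Mc z k k m))
            = (W k z * c) * Real.logb 2 (W k z * c) - (W k z * c) * ent (mixC Mc z k k) := by
        intro z
        have hWc : 0 ≤ W k z * c := mul_nonneg (W_nonneg k z) hcpos.le
        have h1 : ∀ m : T, ((W k z * c) * mixC Mc z k k m) * Real.logb 2 ((W k z * c) * mixC Mc z k k m)
            = mixC Mc z k k m * ((W k z * c) * Real.logb 2 (W k z * c))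
              + (W k z * c) * (mixC Mc z k k m * Real.logb 2 (mixC Mc z k k m)) :=
          fun m => mul_logb_split _ _ hWc (mixC_nonneg Mc hnn z k k m)
        rw [Finset.sum_congr rfl (fun m _ => h1 m), Finset.sum_add_distrib,
          ← Finset.sum_mul, ← Finset.mul_sum, mixC_sum_one Mc hsum z k k]
        have h2 : (∑ m : T, mixC Mc z k k m * Real.logb 2 (mixC Mc z k k m))
            = -ent (mixC Mc z k k) := by rw [ent]; ring
        rw [h2]
        ring
      rw [Finset.sum_congr rfl (fun z _ => hin z), Finset.sum_sub_distrib, e4inner k]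
      congr 1
      have h3 : ∀ z : Fin n → Bool, (W k z * c) * ent (mixC Mc z k k)
          = W k z * (c * ent (mixC Mc z k k)) := fun z => by ring
      simp only [hW] at h3 ⊢
      rw [Finset.sum_congr rfl (fun z _ => h3 z),
        sum_pref_collapse (fun z => c * ent (mixC Mc z k k))]
      have h4 : ∀ x : Fin n → Bool, ent (mixC Mc (prefLe x k) k k) = ent (mixC Mc x k k) := by
        intro x
        rw [mixC_congr Mc k k (fun i hi => prefLe_apply_le x k i hi)]
      rw [Finset.mul_sum]
      exact Finset.sum_congr rfl (fun x _ => by rw [h4 x])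
    rw [Finset.sum_congr rfl (fun k _ => hout k), Finset.sum_sub_distrib]
    rw [Finset.mul_sum]
    ring
  -- full entropy
  have e3 : ent (fun q : (Fin n → Bool) × T × (Fin n × (Fin n → Bool)) =>
      if q.2.2.2 = prefLe q.1 q.2.2.1 then c * Mc q.1 q.2.2.1 q.2.1 else 0)
      = -(2^n * (n:ℝ) * (c * Real.logb 2 c))
        + c * ∑ k : Fin n, ∑ x : Fin n → Bool, ent (Mc x k) := by
    rw [ent]
    simp only [Fintype.sum_prod_type]
    have hout : ∀ x : Fin n → Bool,
        (∑ m : T, ∑ k : Fin n, ∑ z : Fin n → Bool,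
          (if z = prefLe x k then c * Mc x k m else 0)
            * Real.logb 2 (if z = prefLe x k then c * Mc x k m else 0))
        = ∑ k : Fin n, (c * Real.logb 2 c - c * ent (Mc x k)) := by
      intro x
      rw [Finset.sum_comm]
      apply Finset.sum_congr rfl
      intro k _
      have h1 : ∀ (m : T) (z : Fin n → Bool),
          (if z = prefLe x k then c * Mc x k m else 0)
            * Real.logb 2 (if z = prefLe x k then c * Mc x k m else 0)
          = if z = prefLe x k then (c * Mc x k m) * Real.logb 2 (c * Mc x k m) else 0 := by
        intro m z; by_cases h : z = prefLe x k <;> simp [h]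
      have h2 : ∀ m : T,
          (∑ z : Fin n → Bool, (if z = prefLe x k then c * Mc x k m else 0)
            * Real.logb 2 (if z = prefLe x k then c * Mc x k m else 0))
          = (c * Mc x k m) * Real.logb 2 (c * Mc x k m) := by
        intro m
        rw [Finset.sum_congr rfl (fun z _ => h1 m z),
          sum_ite_pref x k (fun _ => (c * Mc x k m) * Real.logb 2 (c * Mc x k m))]
      rw [Finset.sum_congr rfl (fun m _ => h2 m)]
      have h3 : ∀ m : T, (c * Mc x k m) * Real.logb 2 (c * Mc x k m)
          = Mc x k m * (c * Real.logb 2 c) + c * (Mc x k m * Real.logb 2 (Mc x k m)) :=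
        fun m => mul_logb_split _ _ hcpos.le (hnn x k m)
      rw [Finset.sum_congr rfl (fun m _ => h3 m), Finset.sum_add_distrib,
        ← Finset.sum_mul, ← Finset.mul_sum, hsum x k]
      have h4 : (∑ m : T, Mc x k m * Real.logb 2 (Mc x k m)) = -ent (Mc x k) := by
        rw [ent]; ring
      rw [h4]
      ring
    rw [Finset.sum_congr rfl (fun x _ => hout x)]
    rw [Finset.sum_comm]
    have h5 : ∀ k : Fin n, (∑ x : Fin n → Bool, (c * Real.logb 2 c - c * ent (Mc x k)))
        = 2^n * (c * Real.logb 2 c) - c * ∑ x : Fin n → Bool, ent (Mc x k) := by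
      intro k
      rw [Finset.sum_sub_distrib]
      rw [show (∑ _x : Fin n → Bool, c * Real.logb 2 c) = (2^n : ℝ) * (c * Real.logb 2 c) from by
        simp only [Finset.sum_const, Finset.card_univ, nsmul_eq_mul]; rw [hcard]]
      rw [show (∑ x : Fin n → Bool, c * ent (Mc x k))
          = c * ∑ x : Fin n → Bool, ent (Mc x k) from (Finset.mul_sum _ _ _).symm]
    rw [Finset.sum_congr rfl (fun k _ => h5 k), Finset.sum_sub_distrib]
    rw [show (∑ k : Fin n, c * ∑ x : Fin n → Bool, ent (Mc x k))
        = c * ∑ k : Fin n, ∑ x : Fin n → Bool, ent (Mc x k) from (Finset.mul_sum _ _ _).symm]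
    simp only [Finset.sum_const, Finset.card_univ, Fintype.card_fin, nsmul_eq_mul]
    ring
  -- assemble
  dsimp only
  rw [m1, e1, m2, e2, e3, m4, e4]
  have hlast : ∀ (k : Fin n) (x : Fin n → Bool),
      ent (Mc x k) = ent (mixC Mc x ⟨n-1, by omega⟩ k) := by
    intro k x
    rw [mixC_last Mc (by simp; omega) x k]
  have step : (∑ k : Fin n, ∑ x : Fin n → Bool, ent (Mc x k))
      = ∑ k : Fin n, ∑ x : Fin n → Bool, ent (mixC Mc x ⟨n-1, by omega⟩ k) :=
    Finset.sum_congr rfl (fun k _ => Finset.sum_congr rfl (fun x _ => hlast k x))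
  rw [step]
  simp only [Fent]
  have hB : (1/(n:ℝ)) * ∑ k : Fin n,
        ((1/2^n) * (∑ x : Fin n → Bool, ent (mixC Mc x k k))
          - (1/2^n) * ∑ x : Fin n → Bool, ent (mixC Mc x ⟨n-1, by omega⟩ k))
      = c * (∑ k : Fin n, ∑ x : Fin n → Bool, ent (mixC Mc x k k))
        - c * ∑ k : Fin n, ∑ x : Fin n → Bool, ent (mixC Mc x ⟨n-1, by omega⟩ k) := by
    rw [Finset.sum_sub_distrib, mul_sub, ← Finset.mul_sum, ← Finset.mul_sum, hc]
    ring
  rw [hB]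
  ring
end cmi


/-- Lemma `thm-flip`: with `X` uniform on `{0,1}^n`, `K` uniform on `[n]`
independent of `X`, `M⁰` having conditional law `Mc x k` given `(X,K) = (x,k)`, and
`I(X : M⁰ | K, X[1,K]) ≤ d₁·n`, for `J` uniform on `[n/2]` and `L` uniform on
`{n/2+1,…,n}` (0-based `j, l : Fin n`), flipping the `l`-th bit of Alice's prefix
perturbs the suffix-mixture transcript distribution by at most `16κd₁` on average:
`E_{(z,j,l)} h(M(z·X[l+1,n]; z[1,j]), M(z[1,l−1]·z̄_l·X[l+1,n]; z[1,j]))² ≤ 16κd₁`. -/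
theorem bit_flip_perturbation
    {n : ℕ} (hn : Even n) (hpos : 0 < n) {T : Type*} [Fintype T]
    (Mc : (Fin n → Bool) → Fin n → T → ℝ)
    (hnn : ∀ x k m, 0 ≤ Mc x k m)
    (hsum : ∀ x k, ∑ m, Mc x k m = 1)
    (d₁ : ℝ)
    (hICA : condMI (fun q : (Fin n → Bool) × T × (Fin n × (Fin n → Bool)) =>
        if q.2.2.2 = prefLe q.1 q.2.2.1 then
          (1 / 2 ^ n) * (1 / (n : ℝ)) * Mc q.1 q.2.2.1 q.2.1
        else 0) ≤ d₁ * n) :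
    (1 / 2 ^ n) * (2 / (n : ℝ)) ^ 2 *
        ∑ x : Fin n → Bool,
          ∑ j ∈ Finset.univ.filter (fun j : Fin n => (j : ℕ) < n / 2),
            ∑ l ∈ Finset.univ.filter (fun l : Fin n => n / 2 ≤ (l : ℕ)),
              hell (mixC Mc x l j) (mixC Mc (flipAt x l) l j) ^ 2
      ≤ 16 * (Real.log 2 / 2) * d₁ := by
  have hn0 : (n:ℝ) ≠ 0 := Nat.cast_ne_zero.mpr hpos.ne'
  set L : Fin n := ⟨n-1, by omega⟩ with hL
  -- Claim 1 : per j, the inner double sum is bounded by the telescoping information.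
  have key1 : ∀ j : Fin n, (j:ℕ) < n/2 →
      (1/2^n : ℝ) * ∑ x : Fin n → Bool,
          ∑ l ∈ Finset.univ.filter (fun l : Fin n => n/2 ≤ (l:ℕ)),
            hell (mixC Mc x l j) (mixC Mc (flipAt x l) l j) ^ 2
        ≤ 2 * Real.log 2 * (Fent Mc j j - Fent Mc j L) := by
    intro j hj
    refine le_trans ?_ (Fent_telescope Mc hnn hsum j (n-1) (by omega)
      (by have := j.isLt; omega))
    apply mul_le_mul_of_nonneg_left _ (by positivity)
    apply Finset.sum_le_sum
    intro x _
    apply Finset.sum_le_sum_of_subset_of_nonneg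
    · intro l hl
      simp only [Finset.mem_filter, Finset.mem_univ, true_and] at hl ⊢
      have := l.isLt
      omega
    · intro l _ _
      positivity
  -- Claim 2 : sum over j of the information bounds.
  have key2 : (∑ j ∈ Finset.univ.filter (fun j : Fin n => (j:ℕ) < n/2),
        2 * Real.log 2 * (Fent Mc j j - Fent Mc j L))
      ≤ 2 * Real.log 2 * ((n:ℝ) * (d₁ * n)) := by
    have h1 : (∑ j ∈ Finset.univ.filter (fun j : Fin n => (j:ℕ) < n/2),
          2 * Real.log 2 * (Fent Mc j j - Fent Mc j L))
        ≤ ∑ j : Fin n, 2 * Real.log 2 * (Fent Mc j j - Fent Mc j L) := by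
      apply Finset.sum_le_sum_of_subset_of_nonneg (Finset.filter_subset _ _)
      intro k _ _
      exact diff_nonneg Mc hnn hsum hpos k
    have h2 : (∑ j : Fin n, 2 * Real.log 2 * (Fent Mc j j - Fent Mc j L))
        = 2 * Real.log 2 * ((n:ℝ) * ((1/(n:ℝ)) * ∑ k : Fin n, (Fent Mc k k - Fent Mc k L))) := by
      rw [← Finset.mul_sum]
      field_simp
    have h3 : (1/(n:ℝ)) * ∑ k : Fin n, (Fent Mc k k - Fent Mc k L) ≤ d₁ * n := by
      rw [← condMI_eq Mc hnn hsum hpos]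
      exact hICA
    calc (∑ j ∈ Finset.univ.filter (fun j : Fin n => (j:ℕ) < n/2),
          2 * Real.log 2 * (Fent Mc j j - Fent Mc j L))
        ≤ ∑ j : Fin n, 2 * Real.log 2 * (Fent Mc j j - Fent Mc j L) := h1
      _ = 2 * Real.log 2 * ((n:ℝ) * ((1/(n:ℝ)) * ∑ k : Fin n, (Fent Mc k k - Fent Mc k L))) := h2
      _ ≤ 2 * Real.log 2 * ((n:ℝ) * (d₁ * n)) := by
          apply mul_le_mul_of_nonneg_left _ (by positivity)
          apply mul_le_mul_of_nonneg_left h3 (by positivity)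
  -- assemble
  have reorder : (∑ x : Fin n → Bool,
        ∑ j ∈ Finset.univ.filter (fun j : Fin n => (j : ℕ) < n / 2),
          ∑ l ∈ Finset.univ.filter (fun l : Fin n => n / 2 ≤ (l : ℕ)),
            hell (mixC Mc x l j) (mixC Mc (flipAt x l) l j) ^ 2)
      = ∑ j ∈ Finset.univ.filter (fun j : Fin n => (j : ℕ) < n / 2),
          ∑ x : Fin n → Bool,
            ∑ l ∈ Finset.univ.filter (fun l : Fin n => n / 2 ≤ (l : ℕ)),
              hell (mixC Mc x l j) (mixC Mc (flipAt x l) l j) ^ 2 :=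
    Finset.sum_comm
  rw [reorder]
  have split : (1 / 2 ^ n : ℝ) * (2 / (n : ℝ)) ^ 2 *
        ∑ j ∈ Finset.univ.filter (fun j : Fin n => (j : ℕ) < n / 2),
          ∑ x : Fin n → Bool,
            ∑ l ∈ Finset.univ.filter (fun l : Fin n => n / 2 ≤ (l : ℕ)),
              hell (mixC Mc x l j) (mixC Mc (flipAt x l) l j) ^ 2
      = (2 / (n : ℝ)) ^ 2 *
          ∑ j ∈ Finset.univ.filter (fun j : Fin n => (j : ℕ) < n / 2),
            ((1/2^n : ℝ) * ∑ x : Fin n → Bool,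
              ∑ l ∈ Finset.univ.filter (fun l : Fin n => n / 2 ≤ (l : ℕ)),
                hell (mixC Mc x l j) (mixC Mc (flipAt x l) l j) ^ 2) := by
    rw [Finset.mul_sum, Finset.mul_sum]
    apply Finset.sum_congr rfl
    intro j _
    ring
  rw [split]
  calc (2 / (n : ℝ)) ^ 2 *
          ∑ j ∈ Finset.univ.filter (fun j : Fin n => (j : ℕ) < n / 2),
            ((1/2^n : ℝ) * ∑ x : Fin n → Bool,
              ∑ l ∈ Finset.univ.filter (fun l : Fin n => n / 2 ≤ (l : ℕ)),
                hell (mixC Mc x l j) (mixC Mc (flipAt x l) l j) ^ 2)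
      ≤ (2 / (n : ℝ)) ^ 2 *
          ∑ j ∈ Finset.univ.filter (fun j : Fin n => (j : ℕ) < n / 2),
            2 * Real.log 2 * (Fent Mc j j - Fent Mc j L) := by
        apply mul_le_mul_of_nonneg_left _ (by positivity)
        apply Finset.sum_le_sum
        intro j hj
        simp only [Finset.mem_filter, Finset.mem_univ, true_and] at hj
        exact key1 j hj
    _ ≤ (2 / (n : ℝ)) ^ 2 * (2 * Real.log 2 * ((n:ℝ) * (d₁ * n))) := by
        apply mul_le_mul_of_nonneg_left key2 (by positivity)
    _ = 16 * (Real.log 2 / 2) * d₁ := by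
        field_simp
        ring
end

section
/- Let n be an even positive integer. Let X be uniform on {0,1}^n, K uniform on [n] independent of X, and M⁰ a random variable on a finite set jointly distributed with (X,K); write M(x; x[1,j]) for the conditional law of M⁰ given (X,K) = (x,j), and set c = I(K : M⁰ | X). Let J be uniform on [n/2] and L uniform on {n/2+1,…,n}, with X, J, L mutually independent. For l ∈ {n/2+1,…,n}, z ∈ {0,1}^l and j ≤ l, let M(z·X[l+1,n]; z[1,j]) denote the mixture over a uniformly random suffix s ∈ {0,1}^{n−l} of the distributions M(z·s; z[1,j]). Then E_{(z,j,l)←(X[1,L],J,L)} h( M(z·X[l+1,n]; z[1,j]) , M(z·X[l+1,n]; z) ) ≤ √(8 κ c). -/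
open Finset

/-! ### Auxiliary definitions -/

/-- Squared Hellinger distance. -/
noncomputable def sqh {S : Type*} [Fintype S] (p q : S → ℝ) : ℝ :=
  (1/2) * ∑ s, (Real.sqrt (p s) - Real.sqrt (q s))^2

/-- The `k`-averaged conditional law `M̄_x`. -/
noncomputable def Mb {n : ℕ} {T : Type*} [Fintype T]
    (Mc : (Fin n → Bool) → Fin n → T → ℝ) (x : Fin n → Bool) : T → ℝ :=
  fun m => (∑ k', Mc x k' m) / n

/-- Mixture over a random suffix of the averaged laws. -/
noncomputable def mixB {n : ℕ} {T : Type*} [Fintype T]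
    (Mc : (Fin n → Bool) → Fin n → T → ℝ) (z : Fin n → Bool) (l : Fin n) : T → ℝ :=
  fun m => (∑ y, if ∀ i, i ≤ l → y i = z i then Mb Mc y m else 0)
    / 2 ^ (n - ((l : ℕ) + 1))

/-! ### Elementary facts about `sqh` and `hell` -/

lemma sqh_nonneg {S : Type*} [Fintype S] (p q : S → ℝ) : 0 ≤ sqh p q := by
  unfold sqh; positivity

lemma sqh_comm {S : Type*} [Fintype S] (p q : S → ℝ) : sqh p q = sqh q p := by
  unfold sqh; congr 1; exact Finset.sum_congr rfl fun s _ => by ring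

lemma hell_eq {S : Type*} [Fintype S] (p q : S → ℝ) : hell p q = Real.sqrt (sqh p q) := rfl

lemma l2_triangle {ι : Type*} (s : Finset ι) (a b : ι → ℝ) :
    Real.sqrt (∑ i ∈ s, (a i + b i)^2)
      ≤ Real.sqrt (∑ i ∈ s, (a i)^2) + Real.sqrt (∑ i ∈ s, (b i)^2) := by
  have hcs := Real.sum_mul_le_sqrt_mul_sqrt s a b
  have hA : (0:ℝ) ≤ Real.sqrt (∑ i ∈ s, (a i)^2) := Real.sqrt_nonneg _
  have hB : (0:ℝ) ≤ Real.sqrt (∑ i ∈ s, (b i)^2) := Real.sqrt_nonneg _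
  have hA2 : (Real.sqrt (∑ i ∈ s, (a i)^2))^2 = ∑ i ∈ s, (a i)^2 :=
    Real.sq_sqrt (by positivity)
  have hB2 : (Real.sqrt (∑ i ∈ s, (b i)^2))^2 = ∑ i ∈ s, (b i)^2 :=
    Real.sq_sqrt (by positivity)
  have key : ∑ i ∈ s, (a i + b i)^2
      ≤ (Real.sqrt (∑ i ∈ s, (a i)^2) + Real.sqrt (∑ i ∈ s, (b i)^2))^2 := by
    have expand : ∑ i ∈ s, (a i + b i)^2
        = ∑ i ∈ s, (a i)^2 + 2 * ∑ i ∈ s, a i * b i + ∑ i ∈ s, (b i)^2 := by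
      rw [Finset.mul_sum, ← Finset.sum_add_distrib, ← Finset.sum_add_distrib]
      exact Finset.sum_congr rfl fun i _ => by ring
    nlinarith
  calc Real.sqrt (∑ i ∈ s, (a i + b i)^2)
      ≤ Real.sqrt ((Real.sqrt (∑ i ∈ s, (a i)^2) + Real.sqrt (∑ i ∈ s, (b i)^2))^2) :=
        Real.sqrt_le_sqrt key
  _ = _ := Real.sqrt_sq (by positivity)

lemma hell_triangle {S : Type*} [Fintype S] (p q r : S → ℝ) :
    hell p r ≤ hell p q + hell q r := by
  unfold hell
  rw [Real.sqrt_mul (by norm_num : (0:ℝ) ≤ 1/2), Real.sqrt_mul (by norm_num : (0:ℝ) ≤ 1/2),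
    Real.sqrt_mul (by norm_num : (0:ℝ) ≤ 1/2), ← mul_add]
  refine mul_le_mul_of_nonneg_left ?_ (Real.sqrt_nonneg _)
  have := l2_triangle (univ : Finset S) (fun s => Real.sqrt (p s) - Real.sqrt (q s))
    (fun s => Real.sqrt (q s) - Real.sqrt (r s))
  simpa using this

lemma sum_sqrt_le {ι : Type*} (s : Finset ι) (t : ι → ℝ) (ht : ∀ i, 0 ≤ t i) :
    ∑ i ∈ s, Real.sqrt (t i) ≤ Real.sqrt (s.card) * Real.sqrt (∑ i ∈ s, t i) := by
  have := Real.sum_sqrt_mul_sqrt_le s (f := fun _ => (1:ℝ)) (g := t) (fun _ => zero_le_one) ht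
  simpa using this

/-! ### Joint convexity of squared Hellinger -/

lemma sqrt_mix {ι : Type*} (s : Finset ι) (w p q : ι → ℝ)
    (hw : ∀ i, 0 ≤ w i) (hp : ∀ i, 0 ≤ p i) (hq : ∀ i, 0 ≤ q i) :
    (Real.sqrt (∑ i ∈ s, w i * p i) - Real.sqrt (∑ i ∈ s, w i * q i))^2
      ≤ ∑ i ∈ s, w i * (Real.sqrt (p i) - Real.sqrt (q i))^2 := by
  have hgm : ∑ i ∈ s, Real.sqrt (w i * p i) * Real.sqrt (w i * q i)
      ≤ Real.sqrt (∑ i ∈ s, w i * p i) * Real.sqrt (∑ i ∈ s, w i * q i) :=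
    Real.sum_sqrt_mul_sqrt_le s (fun i => mul_nonneg (hw i) (hp i))
      (fun i => mul_nonneg (hw i) (hq i))
  have hP : (Real.sqrt (∑ i ∈ s, w i * p i))^2 = ∑ i ∈ s, w i * p i :=
    Real.sq_sqrt (Finset.sum_nonneg fun i _ => mul_nonneg (hw i) (hp i))
  have hQ : (Real.sqrt (∑ i ∈ s, w i * q i))^2 = ∑ i ∈ s, w i * q i :=
    Real.sq_sqrt (Finset.sum_nonneg fun i _ => mul_nonneg (hw i) (hq i))
  have key : ∀ i ∈ s, w i * (Real.sqrt (p i) - Real.sqrt (q i))^2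
      = w i * p i + w i * q i - 2 * (Real.sqrt (w i * p i) * Real.sqrt (w i * q i)) := by
    intro i _
    have h1 : Real.sqrt (w i * p i) * Real.sqrt (w i * q i)
        = w i * (Real.sqrt (p i) * Real.sqrt (q i)) := by
      rw [Real.sqrt_mul (hw i), Real.sqrt_mul (hw i)]
      rw [show Real.sqrt (w i) * Real.sqrt (p i) * (Real.sqrt (w i) * Real.sqrt (q i))
          = Real.sqrt (w i) * Real.sqrt (w i) * (Real.sqrt (p i) * Real.sqrt (q i)) by ring,
        Real.mul_self_sqrt (hw i)]
    rw [h1]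
    have hsp : Real.sqrt (p i) ^ 2 = p i := Real.sq_sqrt (hp i)
    have hsq : Real.sqrt (q i) ^ 2 = q i := Real.sq_sqrt (hq i)
    linear_combination (w i) * hsp + (w i) * hsq
  have hexp : ∑ i ∈ s, w i * (Real.sqrt (p i) - Real.sqrt (q i))^2
      = ∑ i ∈ s, w i * p i + ∑ i ∈ s, w i * q i
        - 2 * ∑ i ∈ s, Real.sqrt (w i * p i) * Real.sqrt (w i * q i) := by
    rw [Finset.sum_congr rfl key, Finset.sum_sub_distrib, Finset.sum_add_distrib,
      ← Finset.mul_sum]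
  nlinarith [hgm, hP, hQ, hexp]

/-! ### Pointwise log-sum inequality and `h² ≤ KL/2` -/

lemma pointwise_kl {p q : ℝ} (hp : 0 ≤ p) (hq : 0 ≤ q) (h : q = 0 → p = 0) :
    2*p - 2*Real.sqrt (p*q) ≤ p * Real.log (p/q) := by
  rcases eq_or_lt_of_le hp with hp0 | hp0
  · simp [← hp0]
  · have hq0 : 0 < q := by
      rcases eq_or_lt_of_le hq with hq0 | hq0
      · exact absurd (h hq0.symm) (ne_of_gt hp0)
      · exact hq0
    have hx : 0 < q / p := div_pos hq0 hp0
    have hlog : Real.log (Real.sqrt (q/p)) ≤ Real.sqrt (q/p) - 1 :=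
      Real.log_le_sub_one_of_pos (Real.sqrt_pos.mpr hx)
    rw [Real.log_sqrt hx.le] at hlog
    have hlogdiv : Real.log (p/q) = - Real.log (q/p) := by
      rw [← Real.log_inv]; congr 1; field_simp
    have hsqrt : Real.sqrt (p*q) = p * Real.sqrt (q/p) := by
      rw [show p*q = p^2*(q/p) by field_simp, Real.sqrt_mul (sq_nonneg p),
        Real.sqrt_sq hp0.le]
    have hmul := mul_le_mul_of_nonneg_left hlog hp
    rw [hlogdiv, hsqrt]
    nlinarith [hmul]

lemma sqh_le_kl {T : Type*} [Fintype T] (p q : T → ℝ)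
    (hp : ∀ m, 0 ≤ p m) (hq : ∀ m, 0 ≤ q m)
    (hps : ∑ m, p m = 1) (hqs : ∑ m, q m = 1)
    (habs : ∀ m, q m = 0 → p m = 0) :
    2 * sqh p q ≤ ∑ m, p m * Real.log (p m / q m) := by
  have expand : ∀ m ∈ (univ : Finset T), (Real.sqrt (p m) - Real.sqrt (q m))^2
      = p m + q m - 2 * Real.sqrt (p m * q m) := by
    intro m _
    have h1 : Real.sqrt (p m * q m) = Real.sqrt (p m) * Real.sqrt (q m) :=
      Real.sqrt_mul (hp m) _
    have h2 : Real.sqrt (p m) ^ 2 = p m := Real.sq_sqrt (hp m)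
    have h3 : Real.sqrt (q m) ^ 2 = q m := Real.sq_sqrt (hq m)
    rw [h1]; nlinarith [h2, h3]
  have h4 : 2 * sqh p q = ∑ m, (2 * p m - 2 * Real.sqrt (p m * q m)) := by
    unfold sqh
    rw [Finset.sum_congr rfl expand]
    rw [Finset.sum_sub_distrib, Finset.sum_add_distrib, hps, hqs, ← Finset.mul_sum,
      Finset.sum_sub_distrib, ← Finset.mul_sum, ← Finset.mul_sum, hps]
    ring
  rw [h4]
  exact Finset.sum_le_sum fun m _ => pointwise_kl (hp m) (hq m) (habs m)

/-! ### The mutual information identity -/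

lemma per_term {w nr a b : ℝ} (hw : 0 < w) (hn : 0 < nr) (ha : 0 ≤ a) (hb : 0 < a → 0 < b) :
    -(w * a * Real.logb 2 w) - w * a * Real.logb 2 (w * nr * b)
      + w * a * Real.logb 2 (w * a) + w * a * Real.logb 2 (nr * w)
    = w * a * Real.logb 2 (a / b) := by
  rcases eq_or_lt_of_le ha with h0 | h0
  · simp [← h0]
  · have hb0 := hb h0
    have l1 : Real.logb 2 (w*nr*b) = Real.logb 2 w + Real.logb 2 nr + Real.logb 2 b := by
      rw [Real.logb_mul (by positivity) (ne_of_gt hb0),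
        Real.logb_mul (ne_of_gt hw) (ne_of_gt hn)]
    have l2 : Real.logb 2 (w*a) = Real.logb 2 w + Real.logb 2 a :=
      Real.logb_mul (ne_of_gt hw) (ne_of_gt h0)
    have l3 : Real.logb 2 (nr*w) = Real.logb 2 nr + Real.logb 2 w :=
      Real.logb_mul (ne_of_gt hn) (ne_of_gt hw)
    have l4 : Real.logb 2 (a/b) = Real.logb 2 a - Real.logb 2 b :=
      Real.logb_div (ne_of_gt h0) (ne_of_gt hb0)
    rw [l1, l2, l3, l4]; ring

lemma sum3_comm {α β γ : Type*} [Fintype α] [Fintype β] [Fintype γ] (f : α → β → γ → ℝ) :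
    ∑ a, ∑ b, ∑ c, f a b c = ∑ c, ∑ a, ∑ b, f a b c := by
  have h : ∀ a : α, ∑ b, ∑ c, f a b c = ∑ c, ∑ b, f a b c := fun a => Finset.sum_comm
  simp_rw [h]
  exact Finset.sum_comm

lemma condMI_eq_s12 {n : ℕ} (hpos : 0 < n) {T : Type*} [Fintype T]
    (Mc : (Fin n → Bool) → Fin n → T → ℝ)
    (hnn : ∀ x k m, 0 ≤ Mc x k m) (hsum : ∀ x k, ∑ m, Mc x k m = 1) :
    condMI (fun q : Fin n × T × (Fin n → Bool) =>
        (1 / 2 ^ n) * (1 / (n : ℝ)) * Mc q.2.2 q.1 q.2.1)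
      = ∑ x, ∑ k, ∑ m, (1 / 2 ^ n) * (1 / (n : ℝ)) * Mc x k m
          * Real.logb 2 (Mc x k m / ((∑ k', Mc x k' m) / n)) := by
  classical
  set w : ℝ := (1 / 2 ^ n) * (1 / (n : ℝ)) with hw
  have hnr : (0:ℝ) < n := Nat.cast_pos.mpr hpos
  have hw0 : 0 < w := by rw [hw]; positivity
  have hA : ent (fun ac : Fin n × (Fin n → Bool) => ∑ b : T, w * Mc ac.2 ac.1 b)
      = -∑ x, ∑ k, ∑ m, w * Mc x k m * Real.logb 2 w := by
    unfold ent
    rw [Fintype.sum_prod_type, Finset.sum_comm]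
    congr 1
    refine Finset.sum_congr rfl fun x _ => Finset.sum_congr rfl fun k _ => ?_
    beta_reduce
    rw [← Finset.mul_sum, hsum x k, mul_one]
    rw [show ∑ m, w * Mc x k m * Real.logb 2 w = (∑ m, w * Mc x k m) * Real.logb 2 w from
      (Finset.sum_mul _ _ _).symm, ← Finset.mul_sum, hsum x k, mul_one]
  have hB : ent (fun bc : T × (Fin n → Bool) => ∑ a : Fin n, w * Mc bc.2 a bc.1)
      = -∑ x, ∑ k, ∑ m, w * Mc x k m
          * Real.logb 2 (w * n * ((∑ k', Mc x k' m) / n)) := by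
    unfold ent
    rw [Fintype.sum_prod_type, Finset.sum_comm]
    congr 1
    refine Finset.sum_congr rfl fun x _ => ?_
    rw [Finset.sum_comm]
    refine Finset.sum_congr rfl fun m _ => ?_
    beta_reduce
    rw [← Finset.mul_sum]
    have harg : w * n * ((∑ k', Mc x k' m) / n) = w * ∑ k', Mc x k' m := by
      field_simp
    rw [harg]
    rw [show ∑ k, w * Mc x k m * Real.logb 2 (w * ∑ k', Mc x k' m)
        = (∑ k, w * Mc x k m) * Real.logb 2 (w * ∑ k', Mc x k' m) from
      (Finset.sum_mul _ _ _).symm, ← Finset.mul_sum]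
  have hsc : ∀ x : Fin n → Bool, ∑ a : Fin n, ∑ b : T, w * Mc x a b = (n:ℝ) * w := by
    intro x
    have h2 : ∀ a ∈ (univ : Finset (Fin n)), ∑ b : T, w * Mc x a b = w := fun a _ => by
      rw [← Finset.mul_sum, hsum x a, mul_one]
    rw [Finset.sum_congr rfl h2, Finset.sum_const, Finset.card_univ, Fintype.card_fin,
      nsmul_eq_mul]
  have hC : ent (fun c : Fin n → Bool => ∑ a : Fin n, ∑ b : T, w * Mc c a b)
      = -∑ x, ∑ k, ∑ m, w * Mc x k m * Real.logb 2 ((n:ℝ) * w) := by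
    unfold ent
    congr 1
    refine Finset.sum_congr rfl fun x _ => ?_
    beta_reduce
    simp only [← Finset.sum_mul]
    rw [hsc x]
  have hP : ent (fun q : Fin n × T × (Fin n → Bool) => w * Mc q.2.2 q.1 q.2.1)
      = -∑ x, ∑ k, ∑ m, w * Mc x k m * Real.logb 2 (w * Mc x k m) := by
    unfold ent
    simp only [Fintype.sum_prod_type]
    congr 1
    exact sum3_comm (fun k m x => w * Mc x k m * Real.logb 2 (w * Mc x k m))
  unfold condMI
  rw [hA, hB, hC, hP]
  rw [show ∀ S1 S2 S3 S4 : ℝ, -S1 + -S2 - -S3 - -S4 = (S3 + S4) - (S1 + S2) from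
    fun _ _ _ _ => by ring]
  simp only [← Finset.sum_add_distrib, ← Finset.sum_sub_distrib]
  refine Finset.sum_congr rfl fun x _ => Finset.sum_congr rfl fun k _ =>
    Finset.sum_congr rfl fun m _ => ?_
  have hb : 0 < Mc x k m → 0 < (∑ k', Mc x k' m) / n := by
    intro h0
    refine div_pos ?_ hnr
    calc (0:ℝ) < Mc x k m := h0
    _ ≤ ∑ k', Mc x k' m := Finset.single_le_sum (fun k' _ => hnn x k' m) (Finset.mem_univ k)
  have := per_term (w := w) (nr := (n:ℝ)) (a := Mc x k m)
    (b := (∑ k', Mc x k' m) / n) hw0 hnr (hnn x k m) hb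
  linarith [this]

/-! ### Counting lemmas -/

lemma count_agree {n : ℕ} (l : Fin n) (y : Fin n → Bool) :
    ((univ : Finset (Fin n → Bool)).filter (fun x => ∀ i, i ≤ l → y i = x i)).card
      = 2 ^ (n - ((l : ℕ) + 1)) := by
  classical
  rw [← Fintype.card_subtype]
  have e : {x : Fin n → Bool // ∀ i, i ≤ l → y i = x i} ≃ ({i : Fin n // l < i} → Bool) :=
    { toFun := fun x i => x.1 i.1
      invFun := fun g => ⟨fun i => if h : i ≤ l then y i else g ⟨i, lt_of_not_ge h⟩,
        fun i hi => by simp [hi]⟩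
      left_inv := fun x => by
        ext i
        by_cases h : i ≤ l
        · simp [h, (x.2 i h).symm]
        · simp [h]
      right_inv := fun g => by
        ext i
        simp [not_le.mpr i.2] }
  rw [Fintype.card_congr e, Fintype.card_fun, Fintype.card_bool]
  congr 1
  rw [Fintype.card_subtype]
  have : (univ : Finset (Fin n)).filter (fun i => l < i) = Finset.Ioi l := by
    ext i; simp
  rw [this, Fin.card_Ioi]
  omega

lemma avg_suffix {n : ℕ} (l : Fin n) (g : (Fin n → Bool) → ℝ) :
    ∑ x : Fin n → Bool, (∑ y, if ∀ i, i ≤ l → y i = x i then g y else 0)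
      = 2 ^ (n - ((l : ℕ) + 1)) * ∑ y, g y := by
  classical
  rw [Finset.sum_comm]
  have h : ∀ y ∈ (univ : Finset (Fin n → Bool)),
      (∑ x : Fin n → Bool, if ∀ i, i ≤ l → y i = x i then g y else 0)
        = (2 ^ (n - ((l : ℕ) + 1)) : ℝ) * g y := by
    intro y _
    rw [Finset.sum_ite, Finset.sum_const, Finset.sum_const_zero, add_zero, count_agree,
      nsmul_eq_mul]
    push_cast
    ring
  rw [Finset.sum_congr rfl h, ← Finset.mul_sum]

lemma cardJ {n : ℕ} (hpos : 0 < n) :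
    ((univ : Finset (Fin n)).filter (fun j : Fin n => (j : ℕ) < n / 2)).card = n / 2 := by
  have h2 : n / 2 < n := Nat.div_lt_self hpos one_lt_two
  have h : (univ : Finset (Fin n)).filter (fun j : Fin n => (j : ℕ) < n / 2)
      = Finset.Iio (⟨n / 2, h2⟩ : Fin n) := by
    ext j; simp [Fin.lt_def]
  rw [h, Fin.card_Iio]

lemma cardL {n : ℕ} (hpos : 0 < n) :
    ((univ : Finset (Fin n)).filter (fun l : Fin n => n / 2 ≤ (l : ℕ))).card = n - n / 2 := by
  have h := Finset.card_filter_add_card_filter_not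
    (s := (univ : Finset (Fin n))) (p := fun l : Fin n => n / 2 ≤ (l : ℕ))
  simp only [not_le, Finset.card_univ, Fintype.card_fin] at h
  rw [cardJ hpos] at h
  omega

/-! ### The mixture bound -/

lemma mix_bound {n : ℕ} {T : Type*} [Fintype T]
    (Mc : (Fin n → Bool) → Fin n → T → ℝ)
    (hnn : ∀ x k m, 0 ≤ Mc x k m) (x : Fin n → Bool) (l k : Fin n) :
    sqh (mixC Mc x l k) (mixB Mc x l)
      ≤ (∑ y, if ∀ i, i ≤ l → y i = x i then sqh (Mc y k) (Mb Mc y) else 0)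
          / 2 ^ (n - ((l : ℕ) + 1)) := by
  classical
  set W : ℝ := 2 ^ (n - ((l : ℕ) + 1)) with hWdef
  have hW : 0 < W := by rw [hWdef]; positivity
  set wg : (Fin n → Bool) → ℝ :=
    fun y => (if ∀ i, i ≤ l → y i = x i then 1 else 0) / W with hwg
  have hwg0 : ∀ y, 0 ≤ wg y := fun y => by
    rw [hwg]; dsimp only
    refine div_nonneg ?_ hW.le
    split <;> norm_num
  have hmc : ∀ k' m, mixC Mc x l k' m = ∑ y, wg y * Mc y k' m := by
    intro k' m
    unfold mixC
    rw [Finset.sum_div]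
    refine Finset.sum_congr rfl fun y _ => ?_
    rw [hwg]; dsimp only
    split
    · ring
    · simp
  have hmb : ∀ m, mixB Mc x l m = ∑ y, wg y * Mb Mc y m := by
    intro m
    unfold mixB
    rw [Finset.sum_div]
    refine Finset.sum_congr rfl fun y _ => ?_
    rw [hwg]; dsimp only
    split
    · ring
    · simp
  have hMb0 : ∀ y m, 0 ≤ Mb Mc y m := fun y m => by
    unfold Mb
    exact div_nonneg (Finset.sum_nonneg fun k' _ => hnn y k' m) (Nat.cast_nonneg n)
  have step1 : sqh (mixC Mc x l k) (mixB Mc x l)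
      ≤ ∑ y, wg y * sqh (Mc y k) (Mb Mc y) := by
    unfold sqh
    have hsw : ∀ m ∈ (univ : Finset T),
        (Real.sqrt (mixC Mc x l k m) - Real.sqrt (mixB Mc x l m))^2
          ≤ ∑ y, wg y * (Real.sqrt (Mc y k m) - Real.sqrt (Mb Mc y m))^2 := by
      intro m _
      rw [hmc k m, hmb m]
      exact sqrt_mix univ wg (fun y => Mc y k m) (fun y => Mb Mc y m)
        hwg0 (fun y => hnn y k m) (fun y => hMb0 y m)
    calc (1/2) * ∑ m, (Real.sqrt (mixC Mc x l k m) - Real.sqrt (mixB Mc x l m))^2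
        ≤ (1/2) * ∑ m, ∑ y, wg y * (Real.sqrt (Mc y k m) - Real.sqrt (Mb Mc y m))^2 := by
          have := Finset.sum_le_sum hsw
          linarith
    _ = ∑ y, wg y * ((1/2) * ∑ m, (Real.sqrt (Mc y k m) - Real.sqrt (Mb Mc y m))^2) := by
          simp only [Finset.mul_sum]
          rw [Finset.sum_comm]
          exact Finset.sum_congr rfl fun y _ =>
            Finset.sum_congr rfl fun m _ => by ring
    _ = _ := rfl
  calc sqh (mixC Mc x l k) (mixB Mc x l) ≤ ∑ y, wg y * sqh (Mc y k) (Mb Mc y) := step1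
  _ = (∑ y, if ∀ i, i ≤ l → y i = x i then sqh (Mc y k) (Mb Mc y) else 0) / W := by
      rw [Finset.sum_div]
      refine Finset.sum_congr rfl fun y _ => ?_
      rw [hwg]; dsimp only
      split
      · ring
      · simp

/-! ### Main theorem -/

/-- Eq. (1) in the proof of Lemma `thm-close`: with `X` uniform on
`{0,1}^n`, `K` uniform on `[n]` independent of `X`, `M⁰` having conditional law
`Mc x k` given `(X,K) = (x,k)`, and `c = I(K : M⁰ | X)`, for `J` uniform on `[n/2]`
and `L` uniform on `{n/2+1,…,n}` (0-based `j, l : Fin n`),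
`E_{(z,j,l)} h(M(z·X[l+1,n]; z[1,j]), M(z·X[l+1,n]; z)) ≤ √(8κc)`. -/
theorem index_change_perturbation_mixture
    {n : ℕ} (hn : Even n) (hpos : 0 < n) {T : Type*} [Fintype T]
    (Mc : (Fin n → Bool) → Fin n → T → ℝ)
    (hnn : ∀ x k m, 0 ≤ Mc x k m)
    (hsum : ∀ x k, ∑ m, Mc x k m = 1) :
    (1 / 2 ^ n) * (2 / (n : ℝ)) ^ 2 *
        ∑ x : Fin n → Bool,
          ∑ j ∈ Finset.univ.filter (fun j : Fin n => (j : ℕ) < n / 2),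
            ∑ l ∈ Finset.univ.filter (fun l : Fin n => n / 2 ≤ (l : ℕ)),
              hell (mixC Mc x l j) (mixC Mc x l l)
      ≤ Real.sqrt (8 * (Real.log 2 / 2) *
          condMI (fun q : Fin n × T × (Fin n → Bool) =>
            (1 / 2 ^ n) * (1 / (n : ℝ)) * Mc q.2.2 q.1 q.2.1)) := by
  classical
  set J := (univ : Finset (Fin n)).filter (fun j : Fin n => (j : ℕ) < n / 2) with hJdef
  set L := (univ : Finset (Fin n)).filter (fun l : Fin n => n / 2 ≤ (l : ℕ)) with hLdef
  set κ : ℝ := Real.log 2 / 2 with hκdef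
  set c : ℝ := condMI (fun q : Fin n × T × (Fin n → Bool) =>
      (1 / 2 ^ n) * (1 / (n : ℝ)) * Mc q.2.2 q.1 q.2.1) with hcdef
  have hnr : (0:ℝ) < n := Nat.cast_pos.mpr hpos
  have h2n : (0:ℝ) < 2 ^ n := by positivity
  set w : ℝ := (1 / 2 ^ n) * (1 / (n : ℝ)) with hwdef
  have hw0 : 0 < w := by rw [hwdef]; positivity
  set tS : ℝ := ∑ x : Fin n → Bool, ∑ k, sqh (Mc x k) (Mb Mc x) with htSdef
  have htS0 : 0 ≤ tS :=
    Finset.sum_nonneg fun x _ => Finset.sum_nonneg fun k _ => sqh_nonneg _ _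
  -- basic facts about Mb
  have hMb0 : ∀ y m, 0 ≤ Mb Mc y m := fun y m =>
    div_nonneg (Finset.sum_nonneg fun k' _ => hnn y k' m) (Nat.cast_nonneg n)
  have hMbs : ∀ x, ∑ m, Mb Mc x m = 1 := by
    intro x
    unfold Mb
    rw [← Finset.sum_div, Finset.sum_comm,
      Finset.sum_congr rfl (fun k (_ : k ∈ univ) => hsum x k), Finset.sum_const,
      Finset.card_univ, Fintype.card_fin, nsmul_eq_mul, mul_one]
    field_simp
  have habs : ∀ x m, Mb Mc x m = 0 → ∀ k, Mc x k m = 0 := by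
    intro x m h k
    unfold Mb at h
    rw [div_eq_zero_iff] at h
    have hs : ∑ k', Mc x k' m = 0 := by
      rcases h with h | h
      · exact h
      · exact absurd h (ne_of_gt hnr)
    exact (Finset.sum_eq_zero_iff_of_nonneg fun k' _ => hnn x k' m).mp hs k (Finset.mem_univ k)
  -- Key 1 : w * tS ≤ κ * c
  have hcid := condMI_eq_s12 hpos Mc hnn hsum
  have h1 : κ * c = ∑ x, ∑ k, ∑ m,
      w * (Mc x k m * Real.log (Mc x k m / Mb Mc x m) / 2) := by
    rw [hcdef, hcid, Finset.mul_sum]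
    refine Finset.sum_congr rfl fun x _ => ?_
    rw [Finset.mul_sum]
    refine Finset.sum_congr rfl fun k _ => ?_
    rw [Finset.mul_sum]
    refine Finset.sum_congr rfl fun m _ => ?_
    have hMbrfl : ((∑ k', Mc x k' m) / (n:ℝ)) = Mb Mc x m := rfl
    rw [hMbrfl, hκdef, hwdef, Real.logb]
    have hlog2 : Real.log 2 ≠ 0 := ne_of_gt (Real.log_pos one_lt_two)
    field_simp
  have key1 : w * tS ≤ κ * c := by
    rw [h1, htSdef, Finset.mul_sum]
    refine Finset.sum_le_sum fun x _ => ?_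
    rw [Finset.mul_sum]
    refine Finset.sum_le_sum fun k _ => ?_
    rw [← Finset.mul_sum]
    refine mul_le_mul_of_nonneg_left ?_ hw0.le
    have h3 := sqh_le_kl (Mc x k) (Mb Mc x) (hnn x k) (hMb0 x) (hsum x k) (hMbs x)
      (fun m hm => habs x m hm k)
    rw [show ∑ m, Mc x k m * Real.log (Mc x k m / Mb Mc x m) / 2
        = (∑ m, Mc x k m * Real.log (Mc x k m / Mb Mc x m)) / 2 from
      (Finset.sum_div _ _ _).symm]
    linarith
  have hkc0 : 0 ≤ κ * c := le_trans (mul_nonneg hw0.le htS0) key1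
  have keytS : tS ≤ 2 ^ n * (n:ℝ) * (κ * c) := by
    have hinv : (2:ℝ) ^ n * (n:ℝ) * w = 1 := by
      rw [hwdef]; field_simp
    calc tS = 2 ^ n * (n:ℝ) * (w * tS) := by rw [← mul_assoc, hinv, one_mul]
    _ ≤ 2 ^ n * (n:ℝ) * (κ * c) := by
        refine mul_le_mul_of_nonneg_left key1 (by positivity)
  -- the mixture quantities
  set G : (Fin n → Bool) → Fin n → Fin n → ℝ := fun x l k =>
    (∑ y, if ∀ i, i ≤ l → y i = x i then sqh (Mc y k) (Mb Mc y) else 0)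
      / 2 ^ (n - ((l : ℕ) + 1)) with hGdef
  have hG0 : ∀ x l k, 0 ≤ G x l k := by
    intro x l k
    rw [hGdef]
    refine div_nonneg (Finset.sum_nonneg fun y _ => ?_) (by positivity)
    split
    · exact sqh_nonneg _ _
    · exact le_refl 0
  have htri : ∀ (x : Fin n → Bool) (l j : Fin n),
      hell (mixC Mc x l j) (mixC Mc x l l) ≤ Real.sqrt (G x l j) + Real.sqrt (G x l l) := by
    intro x l j
    have t1 : hell (mixC Mc x l j) (mixB Mc x l) ≤ Real.sqrt (G x l j) := by
      rw [hell_eq]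
      exact Real.sqrt_le_sqrt (by rw [hGdef]; exact mix_bound Mc hnn x l j)
    have t2 : hell (mixB Mc x l) (mixC Mc x l l) ≤ Real.sqrt (G x l l) := by
      rw [hell_eq, sqh_comm]
      exact Real.sqrt_le_sqrt (by rw [hGdef]; exact mix_bound Mc hnn x l l)
    calc hell (mixC Mc x l j) (mixC Mc x l l)
        ≤ hell (mixC Mc x l j) (mixB Mc x l) + hell (mixB Mc x l) (mixC Mc x l l) :=
          hell_triangle _ _ _
    _ ≤ _ := add_le_add t1 t2
  -- column sums
  have hcolS : ∀ (l k : Fin n), ∑ x, G x l k = ∑ y, sqh (Mc y k) (Mb Mc y) := by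
    intro l k
    rw [hGdef]
    simp only
    rw [← Finset.sum_div, avg_suffix l (fun y => sqh (Mc y k) (Mb Mc y))]
    rw [mul_comm, mul_div_assoc, div_self (by positivity), mul_one]
  -- cardinalities
  have hn2 : n % 2 = 0 := Nat.even_iff.mp hn
  have hJc : J.card = n / 2 := by rw [hJdef]; exact cardJ hpos
  have hLc : L.card = n / 2 := by rw [hLdef, cardL hpos]; omega
  -- sum bounds
  have htS' : tS = ∑ k : Fin n, ∑ y : Fin n → Bool, sqh (Mc y k) (Mb Mc y) := by
    rw [htSdef]; exact Finset.sum_comm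
  have hsubJ : ∑ j ∈ J, (∑ y, sqh (Mc y j) (Mb Mc y)) ≤ tS := by
    rw [htS']
    refine Finset.sum_le_sum_of_subset_of_nonneg (Finset.subset_univ J) ?_
    intro k _ _
    exact Finset.sum_nonneg fun y _ => sqh_nonneg _ _
  have hsubL : ∑ l ∈ L, (∑ y, sqh (Mc y l) (Mb Mc y)) ≤ tS := by
    rw [htS']
    refine Finset.sum_le_sum_of_subset_of_nonneg (Finset.subset_univ L) ?_
    intro k _ _
    exact Finset.sum_nonneg fun y _ => sqh_nonneg _ _
  have hsum1 : ∑ x : Fin n → Bool, ∑ j ∈ J, ∑ l ∈ L, G x l j ≤ ((n/2 : ℕ) : ℝ) * tS := by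
    rw [Finset.sum_comm]
    have hj : ∀ j : Fin n, ∑ x : Fin n → Bool, ∑ l ∈ L, G x l j
        = ((n/2 : ℕ) : ℝ) * (∑ y, sqh (Mc y j) (Mb Mc y)) := by
      intro j
      rw [Finset.sum_comm, Finset.sum_congr rfl (fun l (_ : l ∈ L) => hcolS l j),
        Finset.sum_const, nsmul_eq_mul, hLc]
    rw [Finset.sum_congr rfl (fun j (_ : j ∈ J) => hj j), ← Finset.mul_sum]
    exact mul_le_mul_of_nonneg_left hsubJ (Nat.cast_nonneg _)
  have hsum2 : ∑ x : Fin n → Bool, ∑ j ∈ J, ∑ l ∈ L, G x l l ≤ ((n/2 : ℕ) : ℝ) * tS := by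
    have hx : ∀ x : Fin n → Bool, ∑ j ∈ J, ∑ l ∈ L, G x l l
        = ((n/2 : ℕ) : ℝ) * ∑ l ∈ L, G x l l := by
      intro x
      rw [Finset.sum_const, nsmul_eq_mul, hJc]
    rw [Finset.sum_congr rfl (fun x (_ : x ∈ univ) => hx x), ← Finset.mul_sum]
    refine mul_le_mul_of_nonneg_left ?_ (Nat.cast_nonneg _)
    have hswap : ∑ x : Fin n → Bool, ∑ l ∈ L, G x l l
        = ∑ l ∈ L, ∑ x : Fin n → Bool, G x l l := Finset.sum_comm
    rw [hswap, Finset.sum_congr rfl (fun l (_ : l ∈ L) => hcolS l l)]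
    exact hsubL
  -- Cauchy-Schwarz over the product index set
  set P : Finset ((Fin n → Bool) × (Fin n × Fin n)) := (univ : Finset (Fin n → Bool)) ×ˢ (J ×ˢ L)
    with hPdef
  have hprod : ∀ f : (Fin n → Bool) → Fin n → Fin n → ℝ,
      ∑ p ∈ P, f p.1 p.2.2 p.2.1 = ∑ x : Fin n → Bool, ∑ j ∈ J, ∑ l ∈ L, f x l j := by
    intro f
    rw [hPdef, Finset.sum_product]
    exact Finset.sum_congr rfl fun x _ => by rw [Finset.sum_product]
  have hPcard : (P.card : ℝ) = 2 ^ n * (((n/2 : ℕ) : ℝ) * ((n/2 : ℕ) : ℝ)) := by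
    rw [hPdef, Finset.card_product, Finset.card_product, hJc, hLc, Finset.card_univ]
    rw [Fintype.card_fun, Fintype.card_bool, Fintype.card_fin]
    push_cast
    ring
  have term1 : ∑ x : Fin n → Bool, ∑ j ∈ J, ∑ l ∈ L, Real.sqrt (G x l j)
      ≤ Real.sqrt (P.card) * Real.sqrt (((n/2 : ℕ) : ℝ) * tS) := by
    rw [← hprod (fun x l j => Real.sqrt (G x l j))]
    calc ∑ p ∈ P, Real.sqrt (G p.1 p.2.2 p.2.1)
        ≤ Real.sqrt (P.card) * Real.sqrt (∑ p ∈ P, G p.1 p.2.2 p.2.1) :=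
          sum_sqrt_le P _ (fun p => hG0 _ _ _)
    _ ≤ _ := by
        refine mul_le_mul_of_nonneg_left (Real.sqrt_le_sqrt ?_) (Real.sqrt_nonneg _)
        rw [hprod (fun x l j => G x l j)]
        exact hsum1
  have term2 : ∑ x : Fin n → Bool, ∑ j ∈ J, ∑ l ∈ L, Real.sqrt (G x l l)
      ≤ Real.sqrt (P.card) * Real.sqrt (((n/2 : ℕ) : ℝ) * tS) := by
    rw [← hprod (fun x l _ => Real.sqrt (G x l l))]
    calc ∑ p ∈ P, Real.sqrt (G p.1 p.2.2 p.2.2)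
        ≤ Real.sqrt (P.card) * Real.sqrt (∑ p ∈ P, G p.1 p.2.2 p.2.2) :=
          sum_sqrt_le P _ (fun p => hG0 _ _ _)
    _ ≤ _ := by
        refine mul_le_mul_of_nonneg_left (Real.sqrt_le_sqrt ?_) (Real.sqrt_nonneg _)
        rw [hprod (fun x l _ => G x l l)]
        exact hsum2
  -- assemble
  have core : ∑ x : Fin n → Bool, ∑ j ∈ J, ∑ l ∈ L, hell (mixC Mc x l j) (mixC Mc x l l)
      ≤ 2 * (Real.sqrt (P.card) * Real.sqrt (((n/2 : ℕ) : ℝ) * tS)) := by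
    have step : ∑ x : Fin n → Bool, ∑ j ∈ J, ∑ l ∈ L, hell (mixC Mc x l j) (mixC Mc x l l)
        ≤ ∑ x : Fin n → Bool, ∑ j ∈ J, ∑ l ∈ L,
            (Real.sqrt (G x l j) + Real.sqrt (G x l l)) :=
      Finset.sum_le_sum fun x _ => Finset.sum_le_sum fun j _ =>
        Finset.sum_le_sum fun l _ => htri x l j
    have hsplit : ∑ x : Fin n → Bool, ∑ j ∈ J, ∑ l ∈ L,
          (Real.sqrt (G x l j) + Real.sqrt (G x l l))
        = (∑ x : Fin n → Bool, ∑ j ∈ J, ∑ l ∈ L, Real.sqrt (G x l j))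
          + ∑ x : Fin n → Bool, ∑ j ∈ J, ∑ l ∈ L, Real.sqrt (G x l l) := by
      simp [Finset.sum_add_distrib]
    calc ∑ x : Fin n → Bool, ∑ j ∈ J, ∑ l ∈ L, hell (mixC Mc x l j) (mixC Mc x l l)
        ≤ _ := step
    _ = _ := hsplit
    _ ≤ Real.sqrt (P.card) * Real.sqrt (((n/2 : ℕ) : ℝ) * tS)
          + Real.sqrt (P.card) * Real.sqrt (((n/2 : ℕ) : ℝ) * tS) := add_le_add term1 term2
    _ = _ := by ring
  -- final numeric computation
  have hcast : (n : ℝ) = 2 * ((n/2 : ℕ) : ℝ) := by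
    have h : 2 * (n / 2) = n := by omega
    calc (n:ℝ) = ((2 * (n/2) : ℕ) : ℝ) := by rw [h]
    _ = 2 * ((n/2 : ℕ) : ℝ) := by push_cast; ring
  have hhpos : (0:ℝ) < ((n/2 : ℕ) : ℝ) := by
    have : 0 < n / 2 := by omega
    exact_mod_cast this
  have sq2 : Real.sqrt (((n/2 : ℕ) : ℝ) * tS)
      ≤ Real.sqrt (((n/2 : ℕ) : ℝ) * (2 ^ n * (n:ℝ) * (κ * c))) :=
    Real.sqrt_le_sqrt (mul_le_mul_of_nonneg_left keytS hhpos.le)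
  have Cnn : (0:ℝ) ≤ (1 / 2 ^ n) * (2 / (n : ℝ)) ^ 2 := by positivity
  calc (1 / 2 ^ n) * (2 / (n : ℝ)) ^ 2 *
        ∑ x : Fin n → Bool, ∑ j ∈ J, ∑ l ∈ L, hell (mixC Mc x l j) (mixC Mc x l l)
      ≤ (1 / 2 ^ n) * (2 / (n : ℝ)) ^ 2 *
          (2 * (Real.sqrt (P.card) * Real.sqrt (((n/2 : ℕ) : ℝ) * tS))) :=
        mul_le_mul_of_nonneg_left core Cnn
  _ ≤ (1 / 2 ^ n) * (2 / (n : ℝ)) ^ 2 *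
          (2 * (Real.sqrt (P.card) *
            Real.sqrt (((n/2 : ℕ) : ℝ) * (2 ^ n * (n:ℝ) * (κ * c))))) := by
        refine mul_le_mul_of_nonneg_left ?_ Cnn
        refine mul_le_mul_of_nonneg_left ?_ (by norm_num)
        exact mul_le_mul_of_nonneg_left sq2 (Real.sqrt_nonneg _)
  _ = (1 / 2 ^ n) * (2 / (n : ℝ)) ^ 2 * 2 *
          Real.sqrt ((P.card : ℝ) * (((n/2 : ℕ) : ℝ) * (2 ^ n * (n:ℝ) * (κ * c)))) := by
        rw [Real.sqrt_mul (show (0:ℝ) ≤ (P.card : ℝ) from Nat.cast_nonneg _)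
          (((n/2 : ℕ) : ℝ) * (2 ^ n * (n:ℝ) * (κ * c)))]
        ring
  _ = Real.sqrt (((1 / 2 ^ n) * (2 / (n : ℝ)) ^ 2 * 2) ^ 2 *
          ((P.card : ℝ) * (((n/2 : ℕ) : ℝ) * (2 ^ n * (n:ℝ) * (κ * c))))) := by
        rw [Real.sqrt_mul (sq_nonneg _), Real.sqrt_sq (by positivity)]
  _ = Real.sqrt (8 * κ * c) := by
        refine congrArg Real.sqrt ?_
        rw [hPcard, hcast]
        have hne : ((n/2 : ℕ) : ℝ) ≠ 0 := ne_of_gt hhpos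
        have h2ne : (2:ℝ) ^ n ≠ 0 := ne_of_gt h2n
        field_simp
        ring
end
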